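/- arXiv:1702.03884 — 2 statements merged into one kernel-verified Lean document; each statement's English description precedes it below -/
import Mathlib

section
/- Let G = (V,D,B) be a mixed graph with indeterminate matrices Λ, Ω, let D_L, D_R ⊂ D with restrictions Λ^L, Λ^R, and let Γ = (I−Λ^L)⁻ᵀ Ω (I−Λ^R)⁻¹. Define the flow network G*_flow on {1,…,n} ∪ {1′,…,n′} with unit capacities: edges i→j for (j,i) ∈ D_L, i→i′ for all i, i→j′ for (i,j) ∈ B, and i′→j′ for (i,j) ∈ D_R. Then for any S, T ⊂ V with |S| = |T| = k, if the max-flow from S to T′ in G*_flow is strictly less than k, then |Γ_{S,T}| = 0 as a formal power series. -/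
open scoped BigOperators

/-- A mixed graph on `n` vertices: directed edges `D` and symmetric bidirected
edges `B`, with no self-loops. -/
structure MixedGraph (n : ℕ) where
  D : Fin n → Fin n → Prop
  B : Fin n → Fin n → Prop
  B_symm : ∀ i j, B i j → B j i
  D_irrefl : ∀ i, ¬ D i i
  B_irrefl : ∀ i, ¬ B i i

namespace MixedGraph

variable {n : ℕ}

/-- A trek from `v` to `w` in a mixed graph: a walk with no colliding arrowheads,
consisting of a left-hand side `L 0 = v, L 1, …, L p` (each step along a directed
edge `L (i+1) → L i`, traversed backwards from `v` up to the top `L p`),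
then either (`bid = true`) one bidirected edge `L p ↔ R 0`, or (`bid = false`)
`L p = R 0`, and a right-hand side `R 0, …, R q = w` walking forwards along
directed edges `R j → R (j+1)`.  Vertices may repeat (treks are walks). -/
structure Trek (G : MixedGraph n) (v w : Fin n) where
  p : ℕ
  q : ℕ
  L : Fin (p + 1) → Fin n
  R : Fin (q + 1) → Fin n
  hL : ∀ i : Fin p, G.D (L i.succ) (L i.castSucc)
  hR : ∀ i : Fin q, G.D (R i.castSucc) (R i.succ)
  bid : Bool
  hconn : if bid then G.B (L (Fin.last p)) (R 0) else L (Fin.last p) = R 0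
  hv : L 0 = v
  hw : R (Fin.last q) = w

namespace Trek

variable {G : MixedGraph n} {v w : Fin n}

/-- The vertices on the left-hand side of a trek (including the top). -/
def leftVerts (π : Trek G v w) : Set (Fin n) := Set.range π.L

/-- The vertices on the right-hand side of a trek (including the top). -/
def rightVerts (π : Trek G v w) : Set (Fin n) := Set.range π.R

/-- The trek monomial of a trek, with respect to parameter matrices
`lam` (directed edge coefficients) and `om` (error covariances):
`ω_{top-left, top-right} ∏ λ_{x y}` over all directed edges of the trek. -/
def monom {R' : Type*} [CommSemiring R'] (lam om : Fin n → Fin n → R')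
    (π : Trek G v w) : R' :=
  om (π.L (Fin.last π.p)) (π.R 0)
    * (∏ i : Fin π.p, lam (π.L i.succ) (π.L i.castSucc))
    * ∏ i : Fin π.q, lam (π.R i.castSucc) (π.R i.succ)

/-- A half-trek is a trek whose left-hand side consists of a single vertex. -/
def IsHalfTrek (π : Trek G v w) : Prop := π.p = 0

/-- The trek uses the directed edge `a → b` on its left-hand side. -/
def usesLeft (π : Trek G v w) (a b : Fin n) : Prop :=
  ∃ i : Fin π.p, π.L i.succ = a ∧ π.L i.castSucc = b

/-- The trek uses the directed edge `a → b` on its right-hand side. -/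
def usesRight (π : Trek G v w) (a b : Fin n) : Prop :=
  ∃ i : Fin π.q, π.R i.castSucc = a ∧ π.R i.succ = b

/-- The trek is non-empty (uses at least one edge). -/
def Nonemp (π : Trek G v w) : Prop := 0 < π.p ∨ 0 < π.q ∨ π.bid = true

end Trek

/-- `w` is trek reachable from `v`: there is a non-empty trek from `v` to `w`. -/
def tr (G : MixedGraph n) (v w : Fin n) : Prop :=
  ∃ π : Trek G v w, π.Nonemp

/-- `w` is half-trek reachable from `v`. -/
def htr (G : MixedGraph n) (v w : Fin n) : Prop :=
  ∃ π : Trek G v w, π.IsHalfTrek ∧ π.Nonemp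

/-- `w` is a descendant of `v` (non-empty directed path from `v` to `w`). -/
def des (G : MixedGraph n) (v w : Fin n) : Prop :=
  Relation.TransGen G.D v w

/-- The parents of `w`. -/
def pa (G : MixedGraph n) (w : Fin n) : Set (Fin n) := {z | G.D z w}

/-- The siblings of `w`. -/
def sib (G : MixedGraph n) (w : Fin n) : Set (Fin n) := {z | G.B z w}

end MixedGraph

/-! ### Unit-capacity flow networks -/

open scoped BigOperators

/-- An integral flow of value `r` from the source set `S` to the target set `T`
in the directed graph with edge relation `E`, where every edge and every vertex
has capacity `1`.  Flow enters sources and leaves targets only. -/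
structure UnitFlow {V : Type*} [Fintype V] [DecidableEq V]
    (E : V → V → Prop) (S T : Finset V) (r : ℕ) where
  f : V → V → ℕ
  supp : ∀ u v, f u v ≠ 0 → E u v
  edge_cap : ∀ u v, f u v ≤ 1
  vert_cap_in : ∀ v, (∑ u, f u v) ≤ 1
  vert_cap_out : ∀ v, (∑ u, f v u) ≤ 1
  no_into_src : ∀ s ∈ S, (∑ u, f u s) = 0
  no_outof_tgt : ∀ t ∈ T, (∑ u, f t u) = 0
  conserve : ∀ v, v ∉ S → v ∉ T → (∑ u, f u v) = (∑ u, f v u)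
  value : (∑ s ∈ S, ∑ u, f s u) = r

/-- The maximum flow from `S` to `T` in the unit-capacity network `E`. -/
noncomputable def maxFlow {V : Type*} [Fintype V] [DecidableEq V]
    (E : V → V → Prop) (S T : Finset V) : ℕ :=
  sSup {r | Nonempty (UnitFlow E S T r)}

namespace FlowAux
open Sum Relation List

variable {V : Type*} [Fintype V] [DecidableEq V] {E : V → V → Prop} {S T : Finset V} {r : ℕ}

def infl (g : V → V → ℕ) (v : V) : ℕ := ∑ u, g u v
def outfl (g : V → V → ℕ) (v : V) : ℕ := ∑ u, g v u

lemma single_le_infl (g : V → V → ℕ) (u v : V) : g u v ≤ infl g v :=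
  Finset.single_le_sum (f := fun u => g u v) (fun _ _ => Nat.zero_le _) (Finset.mem_univ u)

lemma single_le_outfl (g : V → V → ℕ) (u v : V) : g u v ≤ outfl g u :=
  Finset.single_le_sum (f := fun w => g u w) (fun _ _ => Nat.zero_le _) (Finset.mem_univ v)

def occup (f : UnitFlow E S T r) (v : V) : ℕ :=
  if v ∈ S then outfl f.f v else infl f.f v

lemma occup_le_one (f : UnitFlow E S T r) (v : V) : occup f v ≤ 1 := by
  unfold occup
  split
  · exact f.vert_cap_out v
  · exact f.vert_cap_in v

/-- the residual relation of a flow, on split vertices -/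
def ResRel (f : UnitFlow E S T r) : (V ⊕ V) → (V ⊕ V) → Prop
  | inl v, inr w => (v = w ∧ occup f v = 0) ∨ f.f w v = 1
  | inr v, inl w => (v = w ∧ occup f v = 1) ∨ (E v w ∧ f.f v w = 0 ∧ w ∉ S ∧ v ∉ T)
  | _, _ => False

def dx (x : V ⊕ V) (w : V) : ℕ := if x = inl w ∨ x = inr w then 1 else 0

lemma dx_inl (v w : V) : dx (inl v : V ⊕ V) w = if w = v then 1 else 0 := by
  unfold dx
  by_cases h : w = v
  · simp [h]
  · have h1 : ¬ ((inl v : V ⊕ V) = inl w ∨ (inl v : V ⊕ V) = inr w) := by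
      rintro (hh | hh)
      · exact h (by injection hh with hh'; exact hh'.symm)
      · exact absurd hh (by simp)
    rw [if_neg h1, if_neg (fun hh => h hh)]

lemma dx_inr (v w : V) : dx (inr v : V ⊕ V) w = if w = v then 1 else 0 := by
  unfold dx
  by_cases h : w = v
  · simp [h]
  · have h1 : ¬ ((inr v : V ⊕ V) = inl w ∨ (inr v : V ⊕ V) = inr w) := by
      rintro (hh | hh)
      · exact absurd hh (by simp)
      · exact h (by injection hh with hh'; exact hh'.symm)
    rw [if_neg h1, if_neg (fun hh => h hh)]

/-- invariant while pushing one extra unit along a residual path; the unit sits at `x`. -/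
structure AugState (f : UnitFlow E S T r) (x : V ⊕ V) (rem : List (V ⊕ V))
    (g : V → V → ℕ) : Prop where
  supp : ∀ u v, g u v ≠ 0 → E u v
  cap : ∀ u v, g u v ≤ 1
  src : ∀ s ∈ S, infl g s = 0
  tgt : ∀ t ∈ T, outfl g t = 0
  bal : ∀ w, w ∉ S → w ∉ T → infl g w = outfl g w + dx x w
  balT : ∀ t ∈ T, infl g t = infl f.f t + dx x t
  capOut : ∀ w, outfl g w ≤ 1
  capIn : ∀ w, x ≠ inl w → infl g w ≤ 1
  capIn2 : ∀ w, infl g w ≤ 2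
  outCur : ∀ v, x = inr v → outfl g v = 0
  valS : ∀ v ∈ S, (x = inl v ∨ x = inr v) → (∑ s ∈ S, outfl g s) = r
  valNS : (∀ v ∈ S, x ≠ inl v ∧ x ≠ inr v) → (∑ s ∈ S, outfl g s) = r + 1
  agree : ∀ u v, g u v ≠ f.f u v → inr u ∉ rem ∧ inl v ∉ rem

/-- update a single edge value -/
def upd (g : V → V → ℕ) (a b : V) (c : ℕ) : V → V → ℕ :=
  Function.update g a (Function.update (g a) b c)

lemma upd_apply (g : V → V → ℕ) (a b : V) (c : ℕ) (u v : V) :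
    upd g a b c u v = if u = a ∧ v = b then c else g u v := by
  unfold upd
  by_cases hu : u = a
  · subst hu
    rw [Function.update_self]
    by_cases hv : v = b
    · subst hv; simp
    · simp [Function.update_of_ne hv, hv]
  · simp [Function.update_of_ne hu, hu]

lemma outfl_upd_same (g : V → V → ℕ) (a b : V) (c : ℕ) :
    outfl (upd g a b c) a + g a b = outfl g a + c := by
  unfold outfl
  have h1 : ∀ w, upd g a b c a w = if w = b then c else g a w := by
    intro w; rw [upd_apply]; simp
  simp only [h1]
  rw [← Finset.add_sum_erase Finset.univ (fun w => if w = b then c else g a w)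
      (Finset.mem_univ b),
    ← Finset.add_sum_erase Finset.univ (fun w => g a w) (Finset.mem_univ b)]
  have h2 : ∑ w ∈ Finset.univ.erase b, (if w = b then c else g a w)
      = ∑ w ∈ Finset.univ.erase b, g a w :=
    Finset.sum_congr rfl (fun w hw => by rw [if_neg (Finset.ne_of_mem_erase hw)])
  rw [h2]; simp; omega

lemma outfl_upd_ne (g : V → V → ℕ) (a b : V) (c : ℕ) {u : V} (h : u ≠ a) :
    outfl (upd g a b c) u = outfl g u := by
  unfold outfl
  apply Finset.sum_congr rfl
  intro w _
  rw [upd_apply]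
  simp [h]

lemma infl_upd_same (g : V → V → ℕ) (a b : V) (c : ℕ) :
    infl (upd g a b c) b + g a b = infl g b + c := by
  unfold infl
  have h1 : ∀ u, upd g a b c u b = if u = a then c else g u b := by
    intro u; rw [upd_apply]; simp
  simp only [h1]
  rw [← Finset.add_sum_erase Finset.univ (fun u => if u = a then c else g u b)
      (Finset.mem_univ a),
    ← Finset.add_sum_erase Finset.univ (fun u => g u b) (Finset.mem_univ a)]
  have h2 : ∑ u ∈ Finset.univ.erase a, (if u = a then c else g u b)
      = ∑ u ∈ Finset.univ.erase a, g u b :=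
    Finset.sum_congr rfl (fun u hu => by rw [if_neg (Finset.ne_of_mem_erase hu)])
  rw [h2]; simp; omega

lemma infl_upd_ne (g : V → V → ℕ) (a b : V) (c : ℕ) {v : V} (h : v ≠ b) :
    infl (upd g a b c) v = infl g v := by
  unfold infl
  apply Finset.sum_congr rfl
  intro u _
  rw [upd_apply]
  simp [h]


lemma sum_peel {A : Finset V} {F G : V → ℕ} {u : V} (hu : u ∈ A)
    (h : ∀ w ∈ A, w ≠ u → F w = G w) :
    ∑ s ∈ A, F s + G u = ∑ s ∈ A, G s + F u := by
  have h1 := Finset.add_sum_erase A F hu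
  have h2 := Finset.add_sum_erase A G hu
  have h3 : ∑ s ∈ A.erase u, F s = ∑ s ∈ A.erase u, G s :=
    Finset.sum_congr rfl
      (fun w hw => h w (Finset.mem_of_mem_erase hw) (Finset.ne_of_mem_erase hw))
  omega

lemma resRel_lr {f : UnitFlow E S T r} {v w : V} :
    ResRel f (inl v) (inr w) = ((v = w ∧ occup f v = 0) ∨ f.f w v = 1) := rfl
lemma resRel_rl {f : UnitFlow E S T r} {v w : V} :
    ResRel f (inr v) (inl w)
      = ((v = w ∧ occup f v = 1) ∨ (E v w ∧ f.f v w = 0 ∧ w ∉ S ∧ v ∉ T)) := rfl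
lemma resRel_ll {f : UnitFlow E S T r} {v w : V} :
    ¬ ResRel f (inl v) (inl w) := fun h => h
lemma resRel_rr {f : UnitFlow E S T r} {v w : V} :
    ¬ ResRel f (inr v) (inr w) := fun h => h

lemma AugState.agree_out {f : UnitFlow E S T r} {x : V ⊕ V} {rem : List (V ⊕ V)}
    {g : V → V → ℕ} (st : AugState f x rem g) {v : V} (hv : (inr v : V ⊕ V) ∈ rem) :
    outfl g v = outfl f.f v := by
  apply Finset.sum_congr rfl
  intro w _
  by_contra h
  exact (st.agree v w h).1 hv

lemma AugState.step {f : UnitFlow E S T r} (hirr : ∀ v, ¬ E v v) {x y : V ⊕ V}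
    {rem : List (V ⊕ V)} {g : V → V → ℕ}
    (st : AugState f x (y :: rem) g) (hxy : ResRel f x y)
    (hx1 : x ∉ (y :: rem)) (hy1 : y ∉ rem) :
    ∃ g', AugState f y rem g' := by
  have hxrem : x ∉ rem := fun h => hx1 (List.mem_cons_of_mem _ h)
  cases x with
  | inl v =>
    cases y with
    | inl w => exact absurd hxy resRel_ll
    | inr w =>
      rw [resRel_lr] at hxy
      rcases hxy with ⟨rfl, hocc⟩ | hback
      · -- internal forward at v
        refine ⟨g, ?_⟩
        have hofv : outfl g v = outfl f.f v :=
          st.agree_out (List.mem_cons_self)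
        have hout0 : outfl g v = 0 := by
          by_cases hvS : v ∈ S
          · rw [hofv]
            unfold occup at hocc; rw [if_pos hvS] at hocc
            exact hocc
          · by_cases hvT : v ∈ T
            · exact st.tgt v hvT
            · rw [hofv]
              unfold occup at hocc; rw [if_neg hvS] at hocc
              have hcons := f.conserve v hvS hvT
              unfold infl at hocc
              unfold outfl
              omega
        have hin1 : infl g v ≤ 1 := by
          by_cases hvS : v ∈ S
          · rw [st.src v hvS]; omega
          · by_cases hvT : v ∈ T
            · have := st.balT v hvT
              unfold occup at hocc; rw [if_neg hvS] at hocc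
              rw [this, dx_inl, if_pos rfl]
              unfold infl at hocc ⊢; omega
            · have := st.bal v hvS hvT
              rw [this, dx_inl, if_pos rfl, hout0]
        have hdx : ∀ w, dx (inr v : V ⊕ V) w = dx (inl v : V ⊕ V) w := by
          intro w; rw [dx_inl, dx_inr]
        exact {
          supp := st.supp, cap := st.cap, src := st.src, tgt := st.tgt
          bal := fun w h1 h2 => by rw [hdx]; exact st.bal w h1 h2
          balT := fun t ht => by rw [hdx]; exact st.balT t ht
          capOut := st.capOut
          capIn := fun w _ => by
            rcases eq_or_ne w v with rfl | hne
            · exact hin1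
            · exact st.capIn w (by simp [hne.symm])
          capIn2 := st.capIn2
          outCur := fun v' hv' => by
            injection hv' with h; subst h; exact hout0
          valS := fun v' hv' hc => st.valS v' hv' (by
            rcases hc with hc | hc
            · exact absurd hc (by simp)
            · injection hc with hc'; exact Or.inl (by rw [hc']))
          valNS := fun hall => st.valNS (fun v' hv' => by
            have := hall v' hv'
            refine ⟨fun hc => ?_, by simp⟩
            injection hc with hc'
            exact this.2 (by rw [hc']))
          agree := fun u v' h =>
            ⟨fun hm => (st.agree u v' h).1 (List.mem_cons_of_mem _ hm),
             fun hm => (st.agree u v' h).2 (List.mem_cons_of_mem _ hm)⟩ }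
      · -- backward edge: cancel the unit w → v ; move to inr w
        have hagreeW : ∀ w', g w w' = f.f w w' := by
          intro w'
          by_contra h
          exact (st.agree w w' h).1 (List.mem_cons_self)
        have hgwv : g w v = 1 := by rw [hagreeW v]; exact hback
        have hwv : w ≠ v := by
          rintro rfl
          exact hirr w (f.supp w w (by omega))
        have hvS : v ∉ S := by
          intro hv
          have h0 := f.no_into_src v hv
          have h1 := single_le_infl f.f w v
          unfold infl at h1
          omega
        have hwT : w ∉ T := by
          intro hw
          have h0 := f.no_outof_tgt w hw
          have h1 := single_le_outfl f.f w v
          unfold outfl at h1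
          omega
        have hofw : outfl g w = outfl f.f w := st.agree_out (List.mem_cons_self)
        have hofw1 : outfl g w = 1 := by
          rw [hofw]
          have h1 : f.f w v ≤ outfl f.f w := single_le_outfl f.f w v
          have h2 : outfl f.f w ≤ 1 := f.vert_cap_out w
          omega
        set g' := upd g w v 0 with hg'
        have hofw0 : outfl g' w = 0 := by
          have := outfl_upd_same g w v 0
          rw [← hg'] at this
          omega
        have hiflv : infl g' v + 1 = infl g v := by
          have := infl_upd_same g w v 0
          rw [← hg'] at this
          omega
        have houtne : ∀ u ≠ w, outfl g' u = outfl g u := fun u hu => outfl_upd_ne g w v 0 hu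
        have hinne : ∀ u ≠ v, infl g' u = infl g u := fun u hu => infl_upd_ne g w v 0 hu
        refine ⟨g', ?_⟩
        exact {
          supp := fun u1 v1 h => by
            rw [hg', upd_apply] at h
            by_cases hc : u1 = w ∧ v1 = v
            · rw [if_pos hc] at h; omega
            · rw [if_neg hc] at h; exact st.supp u1 v1 h
          cap := fun u1 v1 => by
            rw [hg', upd_apply]
            by_cases hc : u1 = w ∧ v1 = v
            · rw [if_pos hc]; omega
            · rw [if_neg hc]; exact st.cap u1 v1
          src := fun s hs => by
            rw [hinne s (fun h => hvS (h ▸ hs))]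
            exact st.src s hs
          tgt := fun t ht => by
            rw [houtne t (fun h => hwT (h ▸ ht))]
            exact st.tgt t ht
          bal := fun w0 h1 h2 => by
            rcases eq_or_ne w0 v with rfl | hv0
            · have hb := st.bal w0 h1 h2
              rw [dx_inl, if_pos rfl] at hb
              rw [dx_inr, if_neg (Ne.symm hwv), houtne w0 (Ne.symm hwv)]
              omega
            · rcases eq_or_ne w0 w with rfl | hw0
              · have hb := st.bal w0 h1 h2
                rw [dx_inl, if_neg hwv] at hb
                rw [dx_inr, if_pos rfl, hofw0, hinne w0 hwv]
                omega
              · have hb := st.bal w0 h1 h2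
                rw [dx_inl, if_neg hv0] at hb
                rw [dx_inr, if_neg hw0, houtne w0 hw0, hinne w0 hv0]
                omega
          balT := fun t ht => by
            rcases eq_or_ne t v with rfl | hv0
            · have hb := st.balT t ht
              rw [dx_inl, if_pos rfl] at hb
              rw [dx_inr, if_neg (Ne.symm hwv)]
              omega
            · have hb := st.balT t ht
              rw [dx_inl, if_neg hv0] at hb
              rw [dx_inr, if_neg (fun h : t = w => hwT (h ▸ ht)), hinne t hv0]
              omega
          capOut := fun w0 => by
            rcases eq_or_ne w0 w with rfl | hw0
            · rw [hofw0]; omega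
            · rw [houtne w0 hw0]; exact st.capOut w0
          capIn := fun w0 _ => by
            rcases eq_or_ne w0 v with rfl | hv0
            · have := st.capIn2 w0; omega
            · rw [hinne w0 hv0]
              exact st.capIn w0 (by simp [Ne.symm hv0])
          capIn2 := fun w0 => by
            rcases eq_or_ne w0 v with rfl | hv0
            · have := st.capIn2 w0; omega
            · rw [hinne w0 hv0]; exact st.capIn2 w0
          outCur := fun v' hv' => by
            injection hv' with h; subst h; exact hofw0
          valS := fun v' hv' hc => by
            have hvw' : v' = w := by
              rcases hc with hc | hc
              · exact absurd hc (by simp)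
              · injection hc with hc'; exact hc'.symm
            subst hvw'
            have hold := st.valNS (fun v0 hv0 => by
              constructor
              · intro hc0; injection hc0 with hc0'; exact hvS (hc0' ▸ hv0)
              · simp)
            have hps := sum_peel (F := outfl g') (G := outfl g) hv'
              (fun w0 _ hw0 => houtne w0 hw0)
            omega
          valNS := fun hall => by
            have hwS : w ∉ S := by
              intro hw
              exact (hall w hw).2 rfl
            have hold := st.valNS (fun v0 hv0 => by
              constructor
              · intro hc0; injection hc0 with hc0'; exact hvS (hc0' ▸ hv0)
              · simp)
            rw [Finset.sum_congr rfl (fun s hs => houtne s (fun h => hwS (h ▸ hs)))]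
            exact hold
          agree := fun u1 v1 h => by
            rw [hg', upd_apply] at h
            by_cases hc : u1 = w ∧ v1 = v
            · obtain ⟨rfl, rfl⟩ := hc
              exact ⟨hy1, hxrem⟩
            · rw [if_neg hc] at h
              exact ⟨fun hm => (st.agree u1 v1 h).1 (List.mem_cons_of_mem _ hm),
                fun hm => (st.agree u1 v1 h).2 (List.mem_cons_of_mem _ hm)⟩ }
  | inr v =>
    cases y with
    | inr w => exact absurd hxy resRel_rr
    | inl w =>
      rw [resRel_rl] at hxy
      rcases hxy with ⟨rfl, _⟩ | ⟨hE, hf0, hwS, hvT⟩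
      · -- internal backward at v : g unchanged
        refine ⟨g, ?_⟩
        have hdx : ∀ w, dx (inl v : V ⊕ V) w = dx (inr v : V ⊕ V) w := by
          intro w; rw [dx_inl, dx_inr]
        exact {
          supp := st.supp, cap := st.cap, src := st.src, tgt := st.tgt
          bal := fun w h1 h2 => by rw [hdx]; exact st.bal w h1 h2
          balT := fun t ht => by rw [hdx]; exact st.balT t ht
          capOut := st.capOut
          capIn := fun w _ => st.capIn w (by simp)
          capIn2 := st.capIn2
          outCur := fun v' hv' => by exact absurd hv' (by simp)
          valS := fun v' hv' hc => st.valS v' hv' (by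
            rcases hc with hc | hc
            · injection hc with hc'; exact Or.inr (by rw [hc'])
            · exact absurd hc (by simp))
          valNS := fun hall => st.valNS (fun v' hv' => by
            have := hall v' hv'
            refine ⟨by simp, fun hc => ?_⟩
            injection hc with hc'
            exact this.1 (by rw [hc']))
          agree := fun u v' h =>
            ⟨fun hm => (st.agree u v' h).1 (List.mem_cons_of_mem _ hm),
             fun hm => (st.agree u v' h).2 (List.mem_cons_of_mem _ hm)⟩ }
      · -- forward edge v → w
        have hvw : v ≠ w := fun h => hirr w (h ▸ hE)
        have hout0 : outfl g v = 0 := st.outCur v rfl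
        have hg0 : g v w = 0 := by
          have := single_le_outfl g v w
          omega
        set g' := upd g v w 1 with hg'
        have hofv1 : outfl g' v = 1 := by
          have := outfl_upd_same g v w 1
          rw [← hg'] at this
          omega
        have hiflw : infl g' w = infl g w + 1 := by
          have := infl_upd_same g v w 1
          rw [← hg'] at this
          omega
        have houtne : ∀ u ≠ v, outfl g' u = outfl g u := fun u hu => outfl_upd_ne g v w 1 hu
        have hinne : ∀ u ≠ w, infl g' u = infl g u := fun u hu => infl_upd_ne g v w 1 hu
        refine ⟨g', ?_⟩
        exact {
          supp := fun u1 v1 h => by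
            rw [hg', upd_apply] at h
            by_cases hc : u1 = v ∧ v1 = w
            · obtain ⟨rfl, rfl⟩ := hc; exact hE
            · rw [if_neg hc] at h; exact st.supp u1 v1 h
          cap := fun u1 v1 => by
            rw [hg', upd_apply]
            by_cases hc : u1 = v ∧ v1 = w
            · rw [if_pos hc]
            · rw [if_neg hc]; exact st.cap u1 v1
          src := fun s hs => by
            rw [hinne s (fun h => hwS (h ▸ hs))]
            exact st.src s hs
          tgt := fun t ht => by
            rw [houtne t (fun h => hvT (h ▸ ht))]
            exact st.tgt t ht
          bal := fun w0 h1 h2 => by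
            rcases eq_or_ne w0 w with rfl | hw0
            · have hb := st.bal w0 h1 h2
              rw [dx_inr, if_neg (Ne.symm hvw)] at hb
              rw [dx_inl, if_pos rfl, hiflw, houtne w0 (Ne.symm hvw)]
              omega
            · rcases eq_or_ne w0 v with rfl | hv0
              · have hb := st.bal w0 h1 h2
                rw [dx_inr, if_pos rfl] at hb
                rw [dx_inl, if_neg hvw, hofv1, hinne w0 hvw]
                omega
              · have hb := st.bal w0 h1 h2
                rw [dx_inr, if_neg hv0] at hb
                rw [dx_inl, if_neg hw0, houtne w0 hv0, hinne w0 hw0]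
                omega
          balT := fun t ht => by
            rcases eq_or_ne t w with rfl | hw0
            · have hb := st.balT t ht
              rw [dx_inr, if_neg (fun h : t = v => hvT (h ▸ ht))] at hb
              rw [dx_inl, if_pos rfl, hiflw]
              omega
            · have hb := st.balT t ht
              rw [dx_inr, if_neg (fun h : t = v => hvT (h ▸ ht))] at hb
              rw [dx_inl, if_neg hw0, hinne t hw0]
              omega
          capOut := fun w0 => by
            rcases eq_or_ne w0 v with rfl | hv0
            · rw [hofv1]
            · rw [houtne w0 hv0]; exact st.capOut w0
          capIn := fun w0 hw0 => by
            have hne : w0 ≠ w := fun h => hw0 (by rw [h])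
            rw [hinne w0 hne]
            exact st.capIn w0 (by simp)
          capIn2 := fun w0 => by
            rcases eq_or_ne w0 w with rfl | hw0
            · rw [hiflw]
              have := st.capIn w0 (by simp)
              omega
            · rw [hinne w0 hw0]; exact st.capIn2 w0
          outCur := fun v' hv' => by exact absurd hv' (by simp)
          valS := fun v' hv' hc => by
            exfalso
            rcases hc with hc | hc
            · injection hc with hc'; exact hwS (hc' ▸ hv')
            · exact absurd hc (by simp)
          valNS := fun _ => by
            by_cases hvS : v ∈ S
            · have hold := st.valS v hvS (Or.inr rfl)
              have hps := sum_peel (F := outfl g') (G := outfl g) hvS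
                (fun w0 _ hw0 => houtne w0 hw0)
              omega
            · have hold := st.valNS (fun v0 hv0 => by
                constructor
                · simp
                · intro hc0; injection hc0 with hc0'; exact hvS (hc0' ▸ hv0))
              rw [Finset.sum_congr rfl (fun s hs => houtne s (fun h => hvS (h ▸ hs)))]
              exact hold
          agree := fun u1 v1 h => by
            rw [hg', upd_apply] at h
            by_cases hc : u1 = v ∧ v1 = w
            · obtain ⟨rfl, rfl⟩ := hc
              exact ⟨hxrem, hy1⟩
            · rw [if_neg hc] at h
              exact ⟨fun hm => (st.agree u1 v1 h).1 (List.mem_cons_of_mem _ hm),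
                fun hm => (st.agree u1 v1 h).2 (List.mem_cons_of_mem _ hm)⟩ }


def AugState.toFlow {f : UnitFlow E S T r} {t : V} {rem : List (V ⊕ V)} {g : V → V → ℕ}
    (hd : Disjoint S T) (ht : t ∈ T) (st : AugState f (inr t) rem g) :
    UnitFlow E S T (r + 1) where
  f := g
  supp := st.supp
  edge_cap := st.cap
  vert_cap_in := fun v => st.capIn v (by simp)
  vert_cap_out := fun v => st.capOut v
  no_into_src := st.src
  no_outof_tgt := st.tgt
  conserve := fun v h1 h2 => by
    have hb := st.bal v h1 h2
    rw [dx_inr, if_neg (fun h : v = t => h2 (h ▸ ht))] at hb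
    show infl g v = outfl g v
    omega
  value := by
    show (∑ s ∈ S, outfl g s) = r + 1
    apply st.valNS
    intro v hv
    refine ⟨by simp, fun hc => ?_⟩
    injection hc with hc'
    exact (Finset.disjoint_left.mp hd hv) (hc' ▸ ht)

lemma augState_init (f : UnitFlow E S T r) (hd : Disjoint S T) {s : V} (hs : s ∈ S)
    (l : List (V ⊕ V)) : AugState f (inl s) l f.f where
  supp := f.supp
  cap := f.edge_cap
  src := f.no_into_src
  tgt := f.no_outof_tgt
  bal := fun w h1 h2 => by
    rw [dx_inl, if_neg (fun h : w = s => h1 (h ▸ hs))]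
    have := f.conserve w h1 h2
    show infl f.f w = outfl f.f w + 0
    unfold infl outfl
    omega
  balT := fun t ht => by
    rw [dx_inl, if_neg (fun h : t = s => (Finset.disjoint_left.mp hd hs) (h ▸ ht))]
    omega
  capOut := f.vert_cap_out
  capIn := fun w _ => f.vert_cap_in w
  capIn2 := fun w => le_trans (f.vert_cap_in w) (by omega)
  outCur := fun v hv => absurd hv (by simp)
  valS := fun _ _ _ => f.value
  valNS := fun hall => absurd rfl (hall s hs).1
  agree := fun _ _ h => absurd rfl h

lemma chain_shrink {α : Type*} {R : α → α → Prop} :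
    ∀ (n : ℕ) (l : List α) (a : α), l.length ≤ n → List.Chain R a l →
      ∃ l', l' ⊆ l ∧ List.Chain R a l' ∧ (a :: l').Nodup ∧
        (a :: l').getLast (by simp) = (a :: l).getLast (by simp) := by
  intro n
  induction n with
  | zero =>
    intro l a hl _
    have : l = [] := List.length_eq_zero_iff.mp (Nat.le_zero.mp hl)
    subst this
    exact ⟨[], by simp, List.Chain.nil, by simp, rfl⟩
  | succ n ih =>
    intro l a hl hc
    by_cases ha : a ∈ l
    · obtain ⟨l1, l2, rfl⟩ := List.append_of_mem ha
      have hc2 : List.Chain R a l2 := (List.isChain_cons_split.mp hc).2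
      have hlen : l2.length ≤ n := by
        have := List.length_append (as := l1) (bs := a :: l2)
        simp only [List.length_cons] at this
        omega
      obtain ⟨l', hsub, hch, hnd, hlast⟩ := ih l2 a hlen hc2
      refine ⟨l', fun x hx => List.mem_append_right l1 (List.mem_cons_of_mem a (hsub hx)),
        hch, hnd, ?_⟩
      have he : (a :: (l1 ++ a :: l2)) = (a :: l1) ++ (a :: l2) := by simp
      have h2 : (a :: (l1 ++ a :: l2)).getLast (by simp) = (a :: l2).getLast (by simp) := by
        rw [List.getLast_congr _ (by simp) he]
        exact List.getLast_append_of_ne_nil _ (by simp)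
      rw [hlast, h2]
    · cases l with
      | nil => exact ⟨[], by simp, List.Chain.nil, by simp, rfl⟩
      | cons b m =>
        obtain ⟨hab, hcm⟩ := List.chain_cons.mp hc
        have hlen : m.length ≤ n := by simpa using hl
        obtain ⟨m', hsub, hch, hnd, hlast⟩ := ih m b hlen hcm
        refine ⟨b :: m', ?_, List.chain_cons.mpr ⟨hab, hch⟩, ?_, ?_⟩
        · intro x hx
          rcases List.mem_cons.mp hx with rfl | h
          · exact List.mem_cons_self
          · exact List.mem_cons_of_mem b (hsub h)
        · refine List.nodup_cons.mpr ⟨?_, hnd⟩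
          intro hmem
          apply ha
          rcases List.mem_cons.mp hmem with rfl | h
          · exact List.mem_cons_self
          · exact List.mem_cons_of_mem b (hsub h)
        · have g1 : (a :: b :: m').getLast (by simp) = (b :: m').getLast (by simp) :=
            List.getLast_cons (by simp)
          have g2 : (a :: b :: m).getLast (by simp) = (b :: m).getLast (by simp) :=
            List.getLast_cons (by simp)
          rw [g1, g2]
          exact hlast

lemma aug_walk {f : UnitFlow E S T r} (hirr : ∀ v, ¬ E v v) (hd : Disjoint S T) :
    ∀ (l : List (V ⊕ V)) (x : V ⊕ V) (g : V → V → ℕ),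
      List.Chain (ResRel f) x l → (x :: l).Nodup → AugState f x l g →
      (∃ t ∈ T, (x :: l).getLast (by simp) = inr t) →
      Nonempty (UnitFlow E S T (r + 1)) := by
  intro l
  induction l with
  | nil =>
    intro x g _ _ st hlast
    obtain ⟨t, ht, hxt⟩ := hlast
    simp only [List.getLast_singleton] at hxt
    subst hxt
    exact ⟨st.toFlow hd ht⟩
  | cons y rest ih =>
    intro x g hch hnd st hlast
    by_cases hfin : ∃ t ∈ T, x = inr t
    · obtain ⟨t, ht, rfl⟩ := hfin
      exact ⟨st.toFlow hd ht⟩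
    · obtain ⟨hxy, hch'⟩ := List.chain_cons.mp hch
      have hnd' := List.nodup_cons.mp hnd
      obtain ⟨g', st'⟩ := st.step hirr hxy hnd'.1 (List.nodup_cons.mp hnd'.2).1
      apply ih y g' hch' hnd'.2 st'
      obtain ⟨t, ht, hxt⟩ := hlast
      refine ⟨t, ht, ?_⟩
      have g1 : (x :: y :: rest).getLast (by simp) = (y :: rest).getLast (by simp) :=
        List.getLast_cons (by simp)
      rw [← g1, hxt]

/-- existence of an augmenting path yields a larger flow -/
lemma aug_exists {f : UnitFlow E S T r} (hirr : ∀ v, ¬ E v v) (hd : Disjoint S T)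
    {s t : V} (hs : s ∈ S) (ht : t ∈ T)
    (h : Relation.ReflTransGen (ResRel f) (inl s) (inr t)) :
    Nonempty (UnitFlow E S T (r + 1)) := by
  obtain ⟨l, hch, hlast⟩ := List.exists_isChain_cons_of_relationReflTransGen h
  obtain ⟨l', _, hch', hnd', hlast'⟩ := chain_shrink l.length l (inl s) le_rfl hch
  exact aug_walk hirr hd l' (inl s) f.f hch' hnd' (augState_init f hd hs l')
    ⟨t, ht, by rw [hlast', hlast]⟩


open scoped Classical

noncomputable def Zfin (f : UnitFlow E S T r) : Finset (V ⊕ V) :=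
  Finset.univ.filter (fun x => ∃ s ∈ S, Relation.ReflTransGen (ResRel f) (inl s) x)

lemma mem_Zfin {f : UnitFlow E S T r} {x : V ⊕ V} :
    x ∈ Zfin f ↔ ∃ s ∈ S, Relation.ReflTransGen (ResRel f) (inl s) x := by
  simp [Zfin]

lemma Zfin_tail {f : UnitFlow E S T r} {x y : V ⊕ V} (hx : x ∈ Zfin f)
    (hxy : ResRel f x y) : y ∈ Zfin f := by
  obtain ⟨s, hs, h⟩ := mem_Zfin.mp hx
  exact mem_Zfin.mpr ⟨s, hs, h.tail hxy⟩

lemma inl_mem_Zfin {f : UnitFlow E S T r} {s : V} (hs : s ∈ S) :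
    (inl s : V ⊕ V) ∈ Zfin f :=
  mem_Zfin.mpr ⟨s, hs, Relation.ReflTransGen.refl⟩

/-- the flow on split vertices -/
def Fo (f : UnitFlow E S T r) : (V ⊕ V) → (V ⊕ V) → ℕ
  | inl v, inr w => if v = w then occup f v else 0
  | inr v, inl w => f.f v w
  | _, _ => 0

lemma Fo_ll (f : UnitFlow E S T r) (v w : V) : Fo f (inl v) (inl w) = 0 := rfl
lemma Fo_rr (f : UnitFlow E S T r) (v w : V) : Fo f (inr v) (inr w) = 0 := rfl
lemma Fo_lr (f : UnitFlow E S T r) (v w : V) :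
    Fo f (inl v) (inr w) = if v = w then occup f v else 0 := rfl
lemma Fo_rl (f : UnitFlow E S T r) (v w : V) : Fo f (inr v) (inl w) = f.f v w := rfl

/-- no residual flow enters the reachable set from outside -/
lemma crossIn_zero {f : UnitFlow E S T r} {x y : V ⊕ V} (hx : x ∈ Zfin f)
    (hy : y ∉ Zfin f) : Fo f y x = 0 := by
  cases y with
  | inl v =>
    cases x with
    | inl w => exact Fo_ll f v w
    | inr w =>
      rw [Fo_lr]
      by_cases hvw : v = w
      · subst hvw
        rw [if_pos rfl]
        by_contra h
        have h1 : occup f v = 1 := by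
          have := occup_le_one f v
          omega
        exact hy (Zfin_tail hx (by rw [resRel_rl]; exact Or.inl ⟨rfl, h1⟩))
      · rw [if_neg hvw]
  | inr v =>
    cases x with
    | inr w => exact Fo_rr f v w
    | inl w =>
      rw [Fo_rl]
      by_contra h
      have h1 : f.f v w = 1 := by
        have := f.edge_cap v w
        omega
      exact hy (Zfin_tail hx (by rw [resRel_lr]; exact Or.inr h1))

def cc (f : UnitFlow E S T r) : (V ⊕ V) → ℕ
  | inl v => if v ∈ S then outfl f.f v else 0
  | inr _ => 0

lemma cc_inl (f : UnitFlow E S T r) (v : V) :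
    cc f (inl v) = if v ∈ S then outfl f.f v else 0 := rfl

lemma vertex_balance {f : UnitFlow E S T r}
    (hnaug : ∀ t ∈ T, (inr t : V ⊕ V) ∉ Zfin f) :
    ∀ x ∈ Zfin f, (∑ y, Fo f x y) = (∑ y, Fo f y x) + cc f x := by
  intro x hx
  cases x with
  | inl v =>
    have hout : (∑ y, Fo f (inl v) y) = occup f v := by
      rw [Fintype.sum_sum_type]
      simp only [Fo_ll, Fo_lr, Finset.sum_const_zero, zero_add]
      rw [Finset.sum_ite_eq Finset.univ v (fun _ => occup f v)]
      simp
    have hin : (∑ y, Fo f y (inl v)) = infl f.f v := by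
      rw [Fintype.sum_sum_type]
      simp only [Fo_ll, Fo_rl, Finset.sum_const_zero, zero_add]
      rfl
    rw [hout, hin, cc_inl]
    unfold occup
    by_cases hv : v ∈ S
    · rw [if_pos hv, if_pos hv]
      have h0 : infl f.f v = 0 := f.no_into_src v hv
      omega
    · rw [if_neg hv, if_neg hv]; omega
  | inr v =>
    have hout : (∑ y, Fo f (inr v) y) = outfl f.f v := by
      rw [Fintype.sum_sum_type]
      simp only [Fo_rr, Fo_rl, Finset.sum_const_zero, add_zero]
      rfl
    have hin : (∑ y, Fo f y (inr v)) = occup f v := by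
      rw [Fintype.sum_sum_type]
      simp only [Fo_rr, Fo_lr, Finset.sum_const_zero, add_zero]
      rw [Finset.sum_ite_eq' Finset.univ v (fun w => occup f w)]
      simp
    rw [hout, hin]
    show outfl f.f v = occup f v + 0
    unfold occup
    by_cases hv : v ∈ S
    · rw [if_pos hv]; omega
    · rw [if_neg hv]
      by_cases hvT : v ∈ T
      · exact absurd hx (hnaug v hvT)
      · have := f.conserve v hv hvT
        unfold infl outfl
        omega


lemma cc_sum (f : UnitFlow E S T r) : ∑ x ∈ Zfin f, cc f x = r := by
  have h1 : ∑ x ∈ Zfin f, cc f x = ∑ x : V ⊕ V, cc f x := by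
    apply Finset.sum_subset (Finset.subset_univ _)
    intro x _ hx
    cases x with
    | inl v =>
      rw [cc_inl]
      by_cases hv : v ∈ S
      · exact absurd (inl_mem_Zfin hv) hx
      · rw [if_neg hv]
    | inr v => rfl
  rw [h1, Fintype.sum_sum_type]
  have h2 : ∀ v : V, cc f (inr v) = 0 := fun _ => rfl
  simp only [h2, Finset.sum_const_zero, add_zero, cc_inl]
  rw [Finset.sum_ite_mem, Finset.univ_inter]
  exact f.value

lemma crossOut_eq (f : UnitFlow E S T r)
    (hnaug : ∀ t ∈ T, (inr t : V ⊕ V) ∉ Zfin f) :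
    ∑ x ∈ Zfin f, ∑ y ∈ Finset.univ \ Zfin f, Fo f x y = r := by
  have hsum : ∑ x ∈ Zfin f, (∑ y, Fo f x y)
      = (∑ x ∈ Zfin f, (∑ y, Fo f y x)) + r := by
    rw [Finset.sum_congr rfl (vertex_balance hnaug), Finset.sum_add_distrib, cc_sum]
  have e1 : ∑ x ∈ Zfin f, (∑ y, Fo f x y)
      = (∑ x ∈ Zfin f, ∑ y ∈ Finset.univ \ Zfin f, Fo f x y)
        + ∑ x ∈ Zfin f, ∑ y ∈ Zfin f, Fo f x y := by
    rw [← Finset.sum_add_distrib]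
    exact Finset.sum_congr rfl fun x _ => (Finset.sum_sdiff (Finset.subset_univ _)).symm
  have e2 : ∑ x ∈ Zfin f, (∑ y, Fo f y x)
      = (∑ x ∈ Zfin f, ∑ y ∈ Finset.univ \ Zfin f, Fo f y x)
        + ∑ x ∈ Zfin f, ∑ y ∈ Zfin f, Fo f y x := by
    rw [← Finset.sum_add_distrib]
    exact Finset.sum_congr rfl fun x _ => (Finset.sum_sdiff (Finset.subset_univ _)).symm
  have e3 : ∑ x ∈ Zfin f, ∑ y ∈ Zfin f, Fo f y x
      = ∑ x ∈ Zfin f, ∑ y ∈ Zfin f, Fo f x y := Finset.sum_comm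
  have e4 : ∑ x ∈ Zfin f, ∑ y ∈ Finset.univ \ Zfin f, Fo f y x = 0 := by
    apply Finset.sum_eq_zero
    intro x hx
    apply Finset.sum_eq_zero
    intro y hy
    exact crossIn_zero hx (Finset.mem_sdiff.mp hy).2
  omega

noncomputable def uch (f : UnitFlow E S T r) (v : V) : V :=
  if h : ∃ u, f.f u v = 1 ∧ (inr u : V ⊕ V) ∈ Zfin f then h.choose else v

noncomputable def cutC (f : UnitFlow E S T r) : Finset V :=
  Finset.univ.filter (fun v => (inl v : V ⊕ V) ∈ Zfin f ∧ (inr v : V ⊕ V) ∉ Zfin f)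
    ∪ Finset.univ.filter
        (fun v => (inl v : V ⊕ V) ∉ Zfin f ∧ ∃ u, f.f u v = 1 ∧ (inr u : V ⊕ V) ∈ Zfin f)

lemma cutC_card (f : UnitFlow E S T r)
    (hnaug : ∀ t ∈ T, (inr t : V ⊕ V) ∉ Zfin f) : (cutC f).card ≤ r := by
  set C1 := Finset.univ.filter
    (fun v : V => (inl v : V ⊕ V) ∈ Zfin f ∧ (inr v : V ⊕ V) ∉ Zfin f) with hC1
  set C2 := Finset.univ.filter
    (fun v : V => (inl v : V ⊕ V) ∉ Zfin f ∧ ∃ u, f.f u v = 1 ∧ (inr u : V ⊕ V) ∈ Zfin f)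
    with hC2
  set P1 := C1.image (fun v => ((inl v : V ⊕ V), (inr v : V ⊕ V))) with hP1
  set P2 := C2.image (fun v => ((inr (uch f v) : V ⊕ V), (inl v : V ⊕ V))) with hP2
  have hcard1 : P1.card = C1.card :=
    Finset.card_image_of_injective _ (fun a b h => by
      have := congrArg Prod.fst h
      simpa using this)
  have hcard2 : P2.card = C2.card :=
    Finset.card_image_of_injective _ (fun a b h => by
      have := congrArg Prod.snd h
      simpa using this)
  have hdisj : Disjoint P1 P2 := by
    rw [Finset.disjoint_left]
    intro p hp1 hp2
    rw [hP1, Finset.mem_image] at hp1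
    rw [hP2, Finset.mem_image] at hp2
    obtain ⟨a, _, rfl⟩ := hp1
    obtain ⟨b, _, hb⟩ := hp2
    have := congrArg Prod.snd hb
    simp at this
  have huch : ∀ v ∈ C2, f.f (uch f v) v = 1 ∧ (inr (uch f v) : V ⊕ V) ∈ Zfin f := by
    intro v hv
    rw [hC2, Finset.mem_filter] at hv
    have hex := hv.2.2
    rw [uch, dif_pos hex]
    exact hex.choose_spec
  have hsub : P1 ∪ P2 ⊆ (Zfin f) ×ˢ (Finset.univ \ Zfin f) := by
    intro p hp
    rcases Finset.mem_union.mp hp with hp | hp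
    · rw [hP1, Finset.mem_image] at hp
      obtain ⟨a, ha, rfl⟩ := hp
      rw [hC1, Finset.mem_filter] at ha
      exact Finset.mem_product.mpr ⟨ha.2.1, Finset.mem_sdiff.mpr ⟨Finset.mem_univ _, ha.2.2⟩⟩
    · rw [hP2, Finset.mem_image] at hp
      obtain ⟨a, ha, rfl⟩ := hp
      have h2 := (huch a ha).2
      rw [hC2, Finset.mem_filter] at ha
      exact Finset.mem_product.mpr ⟨h2, Finset.mem_sdiff.mpr ⟨Finset.mem_univ _, ha.2.1⟩⟩
  have hone : ∀ p ∈ P1 ∪ P2, 1 ≤ Fo f p.1 p.2 := by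
    intro p hp
    rcases Finset.mem_union.mp hp with hp | hp
    · rw [hP1, Finset.mem_image] at hp
      obtain ⟨a, ha, rfl⟩ := hp
      rw [hC1, Finset.mem_filter] at ha
      show 1 ≤ Fo f (inl a) (inr a)
      rw [Fo_lr, if_pos rfl]
      by_contra hc
      have h0 : occup f a = 0 := by omega
      exact ha.2.2 (Zfin_tail ha.2.1 (by rw [resRel_lr]; exact Or.inl ⟨rfl, h0⟩))
    · rw [hP2, Finset.mem_image] at hp
      obtain ⟨a, ha, rfl⟩ := hp
      show 1 ≤ Fo f (inr (uch f a)) (inl a)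
      rw [Fo_rl, (huch a ha).1]
  calc (cutC f).card ≤ C1.card + C2.card := Finset.card_union_le _ _
    _ = P1.card + P2.card := by rw [hcard1, hcard2]
    _ = (P1 ∪ P2).card := (Finset.card_union_of_disjoint hdisj).symm
    _ = ∑ _p ∈ P1 ∪ P2, 1 := by simp
    _ ≤ ∑ p ∈ P1 ∪ P2, Fo f p.1 p.2 := Finset.sum_le_sum hone
    _ ≤ ∑ p ∈ (Zfin f) ×ˢ (Finset.univ \ Zfin f), Fo f p.1 p.2 :=
        Finset.sum_le_sum_of_subset hsub
    _ = ∑ x ∈ Zfin f, ∑ y ∈ Finset.univ \ Zfin f, Fo f x y := by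
        rw [Finset.sum_product]
    _ = r := crossOut_eq f hnaug

lemma cutC_blocks (f : UnitFlow E S T r)
    (hnaug : ∀ t ∈ T, (inr t : V ⊕ V) ∉ Zfin f) :
    ∀ s ∈ S, s ∉ cutC f → ∀ x : V,
      Relation.ReflTransGen (fun a b => E a b ∧ b ∉ cutC f) s x →
      (inr x : V ⊕ V) ∈ Zfin f := by
  intro s hs hsC x h
  induction h with
  | refl =>
    by_contra hns
    exact hsC (Finset.mem_union_left _
      (Finset.mem_filter.mpr ⟨Finset.mem_univ s, inl_mem_Zfin hs, hns⟩))
  | @tail b c _ hbc ih =>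
    obtain ⟨hE, hcC⟩ := hbc
    have hbT : b ∉ T := fun hb => (hnaug b hb) ih
    have hinlc : (inl c : V ⊕ V) ∈ Zfin f := by
      by_cases hcS : c ∈ S
      · exact inl_mem_Zfin hcS
      · by_cases hfbc : f.f b c = 0
        · exact Zfin_tail ih (by rw [resRel_rl]; exact Or.inr ⟨hE, hfbc, hcS, hbT⟩)
        · by_contra hnc
          apply hcC
          refine Finset.mem_union_right _
            (Finset.mem_filter.mpr ⟨Finset.mem_univ c, hnc, b, ?_, ih⟩)
          have := f.edge_cap b c
          omega
    by_contra hnc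
    exact hcC (Finset.mem_union_left _
      (Finset.mem_filter.mpr ⟨Finset.mem_univ c, hinlc, hnc⟩))

def zeroFlow (E : V → V → Prop) (S T : Finset V) : UnitFlow E S T 0 where
  f := fun _ _ => 0
  supp := fun _ _ h => absurd rfl h
  edge_cap := fun _ _ => Nat.zero_le 1
  vert_cap_in := fun _ => by simp
  vert_cap_out := fun _ => by simp
  no_into_src := fun _ _ => by simp
  no_outof_tgt := fun _ _ => by simp
  conserve := fun _ _ _ => rfl
  value := by simp

lemma flow_le_cardS (fl : UnitFlow E S T r) : r ≤ S.card := by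
  rw [← fl.value]
  calc ∑ s ∈ S, ∑ u, fl.f s u ≤ ∑ _s ∈ S, 1 :=
        Finset.sum_le_sum (fun s _ => fl.vert_cap_out s)
    _ = S.card := by simp

theorem exists_cut (E : V → V → Prop) (hirr : ∀ v, ¬ E v v) (S T : Finset V)
    (hd : Disjoint S T) (k : ℕ)
    (hb : ∀ r', Nonempty (UnitFlow E S T r') → r' < k) :
    ∃ C : Finset V, C.card < k ∧
      ∀ s ∈ S, s ∉ C → ∀ t ∈ T,
        ¬ Relation.ReflTransGen (fun a b => E a b ∧ b ∉ C) s t := by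
  set M := {r' : ℕ | Nonempty (UnitFlow E S T r')} with hM
  have hne : M.Nonempty := ⟨0, ⟨zeroFlow E S T⟩⟩
  have hbdd : BddAbove M := ⟨S.card, fun r' hr' => flow_le_cardS hr'.some⟩
  have hmem : sSup M ∈ M := Nat.sSup_mem hne hbdd
  obtain ⟨f⟩ := hmem
  have hnaug : ∀ t ∈ T, (inr t : V ⊕ V) ∉ Zfin f := by
    intro t ht hz
    obtain ⟨s, hs, hrtg⟩ := mem_Zfin.mp hz
    obtain ⟨f'⟩ := aug_exists hirr hd hs ht hrtg
    have h1 : sSup M + 1 ∈ M := ⟨f'⟩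
    have h2 := le_csSup hbdd h1
    omega
  refine ⟨cutC f, ?_, ?_⟩
  · have h1 := cutC_card f hnaug
    have h2 := hb (sSup M) ⟨f⟩
    omega
  · intro s hs hsC t ht hrtg
    exact (hnaug t ht) (cutC_blocks f hnaug s hs hsC t hrtg)

end FlowAux

/-- The edge relation of the flow network `G*_flow` associated with a vertex
set `V`, a left directed edge set `DL`, a right directed edge set `DR`, and a
bidirected edge set `B`: on the doubled vertex set `V ⊕ V` (with `Sum.inl i`
playing the role of `i` and `Sum.inr i` of `i′`) there are edges `i → j` for
`(j, i) ∈ DL`, `i → i′` for all `i`, `i → j′` for `(i, j) ∈ B`, and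
`i′ → j′` for `(i, j) ∈ DR`. -/
def flowEdgesLR {V : Type*} (DL DR B : V → V → Prop) :
    (V ⊕ V) → (V ⊕ V) → Prop
  | Sum.inl i, Sum.inl j => DL j i
  | Sum.inl i, Sum.inr j => i = j ∨ B i j
  | Sum.inr i, Sum.inr j => DR i j
  | Sum.inr _, Sum.inl _ => False

/-- The flow network `G_flow` of a mixed graph, in which both sides use all
directed edges. -/
def MixedGraph.flowEdges {n : ℕ} (G : MixedGraph n) :
    (Fin n ⊕ Fin n) → (Fin n ⊕ Fin n) → Prop :=
  flowEdgesLR G.D G.D G.B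





lemma flowEdgesLR_ll {V : Type*} {DL DR B : V → V → Prop} {i j : V} :
    flowEdgesLR DL DR B (Sum.inl i) (Sum.inl j) = DL j i := rfl
lemma flowEdgesLR_lr {V : Type*} {DL DR B : V → V → Prop} {i j : V} :
    flowEdgesLR DL DR B (Sum.inl i) (Sum.inr j) = (i = j ∨ B i j) := rfl
lemma flowEdgesLR_rr {V : Type*} {DL DR B : V → V → Prop} {i j : V} :
    flowEdgesLR DL DR B (Sum.inr i) (Sum.inr j) = DR i j := rfl
lemma flowEdgesLR_rl {V : Type*} {DL DR B : V → V → Prop} {i j : V} :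
    ¬ flowEdgesLR DL DR B (Sum.inr i) (Sum.inl j) := fun h => h

/-! ### STATEMENT 13: max-flow < k forces a vanishing determinant -/

open Matrix MixedGraph

noncomputable instance mvPowerSeriesTop (σ : Type*) : TopologicalSpace (MvPowerSeries σ ℚ) :=
  Pi.topologicalSpace

namespace Aux
open MvPowerSeries



variable {σ : Type*}

/-- degree of a monomial -/
def fdeg (d : σ →₀ ℕ) : ℕ := d.sum fun _ e => e

lemma fdeg_add (d e : σ →₀ ℕ) : fdeg (d + e) = fdeg d + fdeg e := by
  classical
  simpa [fdeg] using Finsupp.sum_add_index (h := fun _ e => e) (by simp) (by simp)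

lemma fdeg_mono {d e : σ →₀ ℕ} (h : d ≤ e) : fdeg d ≤ fdeg e := by
  obtain ⟨c, rfl⟩ := le_iff_exists_add.mp h
  simp [fdeg_add]

lemma fdeg_pos {d : σ →₀ ℕ} (h : d ≠ 0) : 0 < fdeg d := by
  by_contra hc
  push_neg at hc
  apply h
  ext a
  have := Nat.le_zero.mp hc
  classical
  have : ∀ x ∈ d.support, d x = 0 := by
    intro x hx
    by_contra hdx
    have : 0 < fdeg d := by
      refine Finset.sum_pos' (by simp) ⟨x, hx, Nat.pos_of_ne_zero hdx⟩
    omega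
  by_cases ha : a ∈ d.support
  · simpa using this a ha
  · simpa using Finsupp.notMem_support_iff.mp ha

lemma hasSum_iff_coeff {f : ℕ → MvPowerSeries σ ℚ} {a : MvPowerSeries σ ℚ} :
    HasSum f a ↔ ∀ d, HasSum (fun m => coeff d (f m)) (coeff d a) := by
  constructor
  · intro h d
    exact h.map (coeff d).toAddMonoidHom (continuous_apply d)
  · intro h
    rw [HasSum]
    have : Filter.Tendsto (fun s : Finset ℕ => ∑ b ∈ s, f b) Filter.atTop (nhds a) ↔
        ∀ d, Filter.Tendsto (fun s : Finset ℕ => (∑ b ∈ s, f b) d) Filter.atTop (nhds (a d)) :=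
      tendsto_pi_nhds
    rw [SummationFilter.unconditional_filter, this]
    intro d
    have : (fun s : Finset ℕ => (∑ b ∈ s, f b) d) = fun s : Finset ℕ => ∑ b ∈ s, coeff d (f b) := by
      funext s
      exact map_sum (coeff d) _ _
    rw [this]
    exact h d

lemma hasSum_unique {f : ℕ → MvPowerSeries σ ℚ} {a b : MvPowerSeries σ ℚ}
    (ha : HasSum f a) (hb : HasSum f b) : a = b := by
  rw [hasSum_iff_coeff] at ha hb
  ext d
  exact (ha d).unique (hb d)


variable {ι : Type*} [Fintype ι] [DecidableEq ι]


/-- entries of powers of a zero-constant-term matrix have vanishing low coefficients -/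
lemma coeff_pow_eq_zero {M : Matrix ι ι (MvPowerSeries σ ℚ)}
    (h0 : ∀ i j, constantCoeff (M i j) = 0) :
    ∀ (m : ℕ) (d : σ →₀ ℕ), fdeg d < m → ∀ i j, coeff d ((M ^ m) i j) = 0 := by
  intro m
  induction m with
  | zero => intro d hd; omega
  | succ m ih =>
    intro d hd i j
    rw [pow_succ]
    rw [Matrix.mul_apply, map_sum]
    apply Finset.sum_eq_zero
    intro x _
    classical
    rw [MvPowerSeries.coeff_mul]
    apply Finset.sum_eq_zero
    intro p hp
    rcases Finset.HasAntidiagonal.mem_antidiagonal.mp hp with hsum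
    by_cases h2 : p.2 = 0
    · have : coeff p.2 (M x j) = 0 := by
        rw [h2]
        simpa [MvPowerSeries.coeff_zero_eq_constantCoeff] using h0 x j
      rw [this, mul_zero]
    · have hdeg : fdeg p.1 < m := by
        have h1 : fdeg p.1 + fdeg p.2 = fdeg d := by
          rw [← hsum]
          classical
          simpa [fdeg] using (Finsupp.sum_add_index (h := fun (_ : σ) e => e) (by simp) (by simp)).symm
        have : 0 < fdeg p.2 := by
          by_contra hc
          push_neg at hc
          apply h2
          ext a
          simp only [Finsupp.coe_zero, Pi.zero_apply]
          by_contra hne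
          have ha : a ∈ p.2.support := Finsupp.mem_support_iff.mpr hne
          have : 0 < fdeg p.2 :=
            Finset.sum_pos' (by simp) ⟨a, ha, Nat.pos_of_ne_zero hne⟩
          omega
        omega
      rw [ih p.1 hdeg i x, zero_mul]

/-- the geometric series of a matrix, defined coefficientwise -/
noncomputable def geomSeries (M : Matrix ι ι (MvPowerSeries σ ℚ)) :
    Matrix ι ι (MvPowerSeries σ ℚ) :=
  fun i j => (fun d => ∑ m ∈ Finset.range (fdeg d + 1), coeff d ((M ^ m) i j))

lemma coeff_geomSeries (M : Matrix ι ι (MvPowerSeries σ ℚ)) (i j : ι) (d : σ →₀ ℕ) :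
    coeff d (geomSeries M i j) = ∑ m ∈ Finset.range (fdeg d + 1), coeff d ((M ^ m) i j) :=
  rfl

lemma hasSum_geomSeries {M : Matrix ι ι (MvPowerSeries σ ℚ)}
    (h0 : ∀ i j, constantCoeff (M i j) = 0) (i j : ι) :
    HasSum (fun m => (M ^ m) i j) (geomSeries M i j) := by
  rw [hasSum_iff_coeff]
  intro d
  rw [coeff_geomSeries]
  apply hasSum_sum_of_ne_finset_zero
  intro m hm
  rw [Finset.mem_range, not_lt] at hm
  exact coeff_pow_eq_zero h0 m d (by omega) i j

/-- coefficient of a matrix product only depends on earlier coefficients of factors -/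
lemma coeff_matMul_congr_left {X X' Y : Matrix ι ι (MvPowerSeries σ ℚ)} {d : σ →₀ ℕ}
    (h : ∀ d' ≤ d, ∀ i x, coeff d' (X i x) = coeff d' (X' i x)) (i j : ι) :
    coeff d ((X * Y) i j) = coeff d ((X' * Y) i j) := by
  classical
  rw [Matrix.mul_apply, Matrix.mul_apply, map_sum, map_sum]
  apply Finset.sum_congr rfl
  intro x _
  rw [MvPowerSeries.coeff_mul, MvPowerSeries.coeff_mul]
  apply Finset.sum_congr rfl
  intro p hp
  have hle : p.1 ≤ d := by
    rw [← Finset.HasAntidiagonal.mem_antidiagonal.mp hp]; exact le_add_of_nonneg_right (by simp)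
  rw [h p.1 hle i x]

lemma coeff_geomSeries_partial {M : Matrix ι ι (MvPowerSeries σ ℚ)}
    (h0 : ∀ i j, constantCoeff (M i j) = 0) {N : ℕ} {d : σ →₀ ℕ} (hN : fdeg d < N)
    (i j : ι) :
    coeff d (geomSeries M i j) = coeff d ((∑ m ∈ Finset.range N, M ^ m) i j) := by
  rw [coeff_geomSeries]
  rw [Matrix.sum_apply, map_sum]
  apply Finset.sum_subset
  · intro m hm; rw [Finset.mem_range] at *; omega
  · intro m _ hm
    rw [Finset.mem_range, not_lt] at hm
    exact coeff_pow_eq_zero h0 m d (by omega) i j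

lemma geomSeries_mul_one_sub {M : Matrix ι ι (MvPowerSeries σ ℚ)}
    (h0 : ∀ i j, constantCoeff (M i j) = 0) :
    geomSeries M * (1 - M) = 1 := by
  classical
  ext i j d
  set N := fdeg d + 1 with hNdef
  have step1 : coeff d ((geomSeries M * (1 - M)) i j)
      = coeff d (((∑ m ∈ Finset.range N, M ^ m) * (1 - M)) i j) := by
    apply coeff_matMul_congr_left
    intro d' hd' i x
    exact coeff_geomSeries_partial h0 (by have := fdeg_mono hd'; omega) i x
  rw [step1]
  have step2 : (∑ m ∈ Finset.range N, M ^ m) * (1 - M) = 1 - M ^ N := by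
    have := geom_sum_mul M N
    have h2 : (∑ m ∈ Finset.range N, M ^ m) * (1 - M)
        = -((∑ m ∈ Finset.range N, M ^ m) * (M - 1)) := by noncomm_ring
    rw [h2, this, neg_sub]
  rw [step2]
  have h3 : coeff d ((M ^ N) i j) = 0 := coeff_pow_eq_zero h0 N d (by omega) i j
  rw [Matrix.sub_apply, map_sub, h3, sub_zero]

lemma coeff_matMul_congr_right {X Y Y' : Matrix ι ι (MvPowerSeries σ ℚ)} {d : σ →₀ ℕ}
    (h : ∀ d' ≤ d, ∀ x j, coeff d' (Y x j) = coeff d' (Y' x j)) (i j : ι) :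
    coeff d ((X * Y) i j) = coeff d ((X * Y') i j) := by
  classical
  rw [Matrix.mul_apply, Matrix.mul_apply, map_sum, map_sum]
  apply Finset.sum_congr rfl
  intro x _
  rw [MvPowerSeries.coeff_mul, MvPowerSeries.coeff_mul]
  apply Finset.sum_congr rfl
  intro p hp
  have hle : p.2 ≤ d := by
    rw [← Finset.HasAntidiagonal.mem_antidiagonal.mp hp]; exact le_add_of_nonneg_left (by simp)
  rw [h p.2 hle x j]

lemma one_sub_mul_geomSeries {M : Matrix ι ι (MvPowerSeries σ ℚ)}
    (h0 : ∀ i j, constantCoeff (M i j) = 0) :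
    (1 - M) * geomSeries M = 1 := by
  classical
  ext i j d
  set N := fdeg d + 1 with hNdef
  have step1 : coeff d (((1 - M) * geomSeries M) i j)
      = coeff d (((1 - M) * (∑ m ∈ Finset.range N, M ^ m)) i j) := by
    apply coeff_matMul_congr_right
    intro d' hd' x j
    exact coeff_geomSeries_partial h0 (by have := fdeg_mono hd'; omega) x j
  rw [step1]
  have step2 : (1 - M) * (∑ m ∈ Finset.range N, M ^ m) = 1 - M ^ N := by
    have := mul_geom_sum M N
    have h2 : (1 - M) * (∑ m ∈ Finset.range N, M ^ m)
        = -((M - 1) * (∑ m ∈ Finset.range N, M ^ m)) := by noncomm_ring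
    rw [h2, this, neg_sub]
  rw [step2]
  have h3 : coeff d ((M ^ N) i j) = 0 := coeff_pow_eq_zero h0 N d (by omega) i j
  rw [Matrix.sub_apply, map_sub, h3, sub_zero]

/-- entries of geomSeries vanish when all powers vanish -/
lemma geomSeries_entry_zero {M : Matrix ι ι (MvPowerSeries σ ℚ)} {i j : ι}
    (h : ∀ m, (M ^ m) i j = 0) : geomSeries M i j = 0 := by
  apply MvPowerSeries.ext
  intro d
  rw [coeff_geomSeries]
  simp [h]

/-- nonzero entries of powers witness reflexive-transitive reachability -/
lemma pow_entry_ne_zero_rtg {M : Matrix ι ι (MvPowerSeries σ ℚ)} :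
    ∀ (m : ℕ) (i j : ι), (M ^ m) i j ≠ 0 →
      Relation.ReflTransGen (fun a b => M a b ≠ 0) i j := by
  intro m
  induction m with
  | zero =>
    intro i j h
    by_cases hij : i = j
    · subst hij; exact Relation.ReflTransGen.refl
    · exact absurd (by simp [pow_zero, Matrix.one_apply_ne hij]) h
  | succ m ih =>
    intro i j h
    rw [pow_succ, Matrix.mul_apply] at h
    obtain ⟨x, _, hx⟩ := Finset.exists_ne_zero_of_sum_ne_zero h
    have h1 : (M ^ m) i x ≠ 0 := fun hc => hx (by rw [hc, zero_mul])
    have h2 : M x j ≠ 0 := fun hc => hx (by rw [hc, mul_zero])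
    exact (ih i x h1).tail h2

end Aux


lemma det_mul_card_lt {R : Type*} [CommRing R] [IsDomain R] {k : ℕ} {ι : Type*}
    [Fintype ι] [DecidableEq ι] (hcard : Fintype.card ι < k)
    (P : Matrix (Fin k) ι R) (Q : Matrix ι (Fin k) R) : (P * Q).det = 0 := by
  let K := FractionRing R
  have hinj : Function.Injective (algebraMap R K) := IsFractionRing.injective R K
  set φ := algebraMap R K with hφ
  have hdet : φ ((P * Q).det) = ((P.map φ) * (Q.map φ)).det := by
    rw [RingHom.map_det, RingHom.mapMatrix_apply, Matrix.map_mul]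
  set Pk := P.map φ with hPk
  have hni : ¬ Function.Injective (Matrix.vecMulLinear Pk) := by
    intro hinj2
    have h1 := LinearMap.finrank_le_finrank_of_injective hinj2
    rw [Module.finrank_fintype_fun_eq_card, Module.finrank_fintype_fun_eq_card] at h1
    simp only [Fintype.card_fin] at h1
    omega
  have hker : LinearMap.ker (Matrix.vecMulLinear Pk) ≠ ⊥ := by
    intro h
    exact hni (LinearMap.ker_eq_bot.mp h)
  obtain ⟨v, hvmem, hv0⟩ := Submodule.exists_mem_ne_zero_of_ne_bot hker
  rw [LinearMap.mem_ker, Matrix.vecMulLinear_apply] at hvmem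
  have hzero : Matrix.vecMul v (Pk * Q.map φ) = 0 := by
    rw [← Matrix.vecMul_vecMul, hvmem]
    ext j
    simp [Matrix.vecMul, dotProduct]
  have hdet0 : (Pk * Q.map φ).det = 0 :=
    Matrix.exists_vecMul_eq_zero_iff.mp ⟨v, hv0, hzero⟩
  apply hinj
  rw [hdet, map_zero, hdet0]

section Factor
open MvPowerSeries Aux

variable {σ : Type*} {n : ℕ}

/-- mask of a matrix: keep only columns in `Aset` -/
def maskIn (Aset : Finset (Fin n)) (M : Matrix (Fin n) (Fin n) (MvPowerSeries σ ℚ)) :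
    Matrix (Fin n) (Fin n) (MvPowerSeries σ ℚ) :=
  fun x y => if y ∈ Aset then M x y else 0

/-- mask of a matrix: delete columns in `Aset` -/
def maskOut (Aset : Finset (Fin n)) (M : Matrix (Fin n) (Fin n) (MvPowerSeries σ ℚ)) :
    Matrix (Fin n) (Fin n) (MvPowerSeries σ ℚ) :=
  fun x y => if y ∈ Aset then 0 else M x y

lemma factor_lemma (M A : Matrix (Fin n) (Fin n) (MvPowerSeries σ ℚ))
    (h0 : ∀ i j, constantCoeff (M i j) = 0)
    (hA : ∀ i j, HasSum (fun m => (M ^ m) i j) (A i j))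
    (Aset : Finset (Fin n)) (l s : Fin n)
    (hgood : l ∉ Aset → ∀ m, ((maskOut Aset M ^ m) l s = 0)) :
    A l s = ∑ a ∈ Aset,
      ((if l ∈ Aset ∧ l = a then 1 else 0) + (A * maskIn Aset M) l a)
        * geomSeries (maskOut Aset M) a s := by
  set MA := maskIn Aset M with hMA
  set M' := maskOut Aset M with hM'
  set G' := geomSeries M' with hG'
  have hsplit : M = M' + MA := by
    ext x y
    by_cases h : y ∈ Aset <;> simp [hM', hMA, maskIn, maskOut, h, Matrix.add_apply]
  have h0' : ∀ i j, constantCoeff (M' i j) = 0 := by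
    intro i j
    rw [hM']
    unfold maskOut
    by_cases h : j ∈ Aset
    · simp [h]
    · simp [h, h0 i j]
  have hAeq : A = geomSeries M := by
    ext i j
    exact congrFun (hasSum_unique (hA i j) (hasSum_geomSeries h0 i j)) _
  have hAone : A * (1 - M) = 1 := by rw [hAeq]; exact geomSeries_mul_one_sub h0
  have hG1 : G' * (1 - M') = 1 := geomSeries_mul_one_sub h0'
  have hG2 : (1 - M') * G' = 1 := one_sub_mul_geomSeries h0'
  have h1 : (A - A * MA * G') * (1 - M') = 1 := by
    have e1 : (A - A * MA * G') * (1 - M')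
        = A * (1 - M') - A * MA * (G' * (1 - M')) := by noncomm_ring
    rw [e1, hG1, mul_one]
    have e2 : A * (1 - M') - A * MA = A * (1 - M) := by rw [hsplit]; noncomm_ring
    rw [e2, hAone]
  have h2 : A - A * MA * G' = G' := by
    calc A - A * MA * G' = (A - A * MA * G') * 1 := (mul_one _).symm
      _ = (A - A * MA * G') * ((1 - M') * G') := by rw [hG2]
      _ = ((A - A * MA * G') * (1 - M')) * G' := (mul_assoc _ _ _).symm
      _ = 1 * G' := by rw [h1]
      _ = G' := one_mul _
  have hid : A = G' + A * MA * G' := sub_eq_iff_eq_add.mp h2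
  have hentry : A l s = G' l s + ∑ x, (A * MA) l x * G' x s := by
    conv_lhs => rw [hid]
    rw [Matrix.add_apply, Matrix.mul_apply]
  have hMA0 : ∀ x, x ∉ Aset → (A * MA) l x = 0 := by
    intro x hx
    rw [Matrix.mul_apply]
    apply Finset.sum_eq_zero
    intro y _
    rw [hMA]
    unfold maskIn
    rw [if_neg hx, mul_zero]
  have hrestrict : ∑ x, (A * MA) l x * G' x s = ∑ x ∈ Aset, (A * MA) l x * G' x s :=
    (Finset.sum_subset (Finset.subset_univ Aset)
      (fun x _ hx => by rw [hMA0 x hx, zero_mul])).symm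
  have hind : G' l s = ∑ a ∈ Aset, (if l ∈ Aset ∧ l = a then 1 else 0) * G' a s := by
    by_cases hl : l ∈ Aset
    · rw [Finset.sum_eq_single l]
      · rw [if_pos ⟨hl, rfl⟩, one_mul]
      · intro b _ hb
        rw [if_neg (fun h => hb h.2.symm), zero_mul]
      · intro h
        exact absurd hl h
    · have hz : G' l s = 0 := geomSeries_entry_zero (hgood hl)
      rw [hz]
      symm
      apply Finset.sum_eq_zero
      intro a _
      rw [if_neg (fun h => hl h.1), zero_mul]
  rw [hentry, hrestrict, hind, ← Finset.sum_add_distrib]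
  apply Finset.sum_congr rfl
  intro a _
  rw [add_mul]

/-- entries of the deleted-mask geometric series vanish without a suitable walk -/
lemma maskOut_pow_zero {D : Fin n → Fin n → Prop}
    (M : Matrix (Fin n) (Fin n) (MvPowerSeries σ ℚ))
    (hM : ∀ i j, M i j ≠ 0 → D i j) (Aset : Finset (Fin n)) {l s : Fin n}
    (hno : ¬ Relation.ReflTransGen (fun a b => D a b ∧ b ∉ Aset) l s) (m : ℕ) :
    (maskOut Aset M ^ m) l s = 0 := by
  by_contra h
  apply hno
  have hrel : ∀ a b, maskOut Aset M a b ≠ 0 → D a b ∧ b ∉ Aset := by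
    intro a b hab
    unfold maskOut at hab
    by_cases hb : b ∈ Aset
    · rw [if_pos hb] at hab; exact absurd rfl hab
    · rw [if_neg hb] at hab
      exact ⟨hM a b hab, hb⟩
  exact Relation.ReflTransGen.mono hrel _ _ (Aux.pow_entry_ne_zero_rtg m l s h)

end Factor



/-- **Vanishing determinant lemma (asymmetric trek separation).**
Let `G = (V, D, B)` be a mixed graph with indeterminate matrices `Λ, Ω`, let
`D_L, D_R ⊂ D` with restrictions `Λ^L, Λ^R`, and let
`Γ = (I - Λ^L)⁻ᵀ Ω (I - Λ^R)⁻¹` (the inverses being the formal geometric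
series `AL`, `AR`).  Consider the unit-capacity flow network `G*_flow` on
`{1,…,n} ∪ {1′,…,n′}` with edges `i → j` for `(j,i) ∈ D_L`, `i → i′` for all
`i`, `i → j′` for `(i,j) ∈ B`, and `i′ → j′` for `(i,j) ∈ D_R`.  Then for any
`S, T ⊂ V` with `|S| = |T| = k`, if the max-flow from `S` to `T′` in
`G*_flow` is strictly less than `k`, then `|Γ_{S,T}| = 0` as a formal power
series. -/
theorem det_zero_of_maxFlow_lt {n k : ℕ} (G : MixedGraph n)
    [DecidableRel G.D] [DecidableRel G.B]
    (DL DR : Fin n → Fin n → Prop) [DecidableRel DL] [DecidableRel DR]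
    (hDL : ∀ i j, DL i j → G.D i j) (hDR : ∀ i j, DR i j → G.D i j)
    (LamL LamR Om :
      Matrix (Fin n) (Fin n) (MvPowerSeries ((Fin n × Fin n) ⊕ (Fin n × Fin n)) ℚ))
    (hLamL : ∀ i j, LamL i j = if DL i j then MvPowerSeries.X (Sum.inl (i, j)) else 0)
    (hLamR : ∀ i j, LamR i j = if DR i j then MvPowerSeries.X (Sum.inl (i, j)) else 0)
    (hOm : ∀ i j, Om i j =
      if i = j ∨ G.B i j then MvPowerSeries.X (Sum.inr (i, j)) else 0)
    (AL AR : Matrix (Fin n) (Fin n) (MvPowerSeries ((Fin n × Fin n) ⊕ (Fin n × Fin n)) ℚ))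
    (hAL : ∀ i j, HasSum (fun m : ℕ => (LamL ^ m) i j) (AL i j))
    (hAR : ∀ i j, HasSum (fun m : ℕ => (LamR ^ m) i j) (AR i j))
    (Gam : Matrix (Fin n) (Fin n) (MvPowerSeries ((Fin n × Fin n) ⊕ (Fin n × Fin n)) ℚ))
    (hGam : Gam = ALᵀ * Om * AR)
    (S T : Fin k → Fin n) (hS : Function.Injective S) (hT : Function.Injective T)
    (hflow : maxFlow (flowEdgesLR DL DR G.B)
        (Finset.univ.image fun i => Sum.inl (S i))
        (Finset.univ.image fun i => Sum.inr (T i)) < k) :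
    (Gam.submatrix S T).det = 0 := by
  classical
  haveI : IsDomain (MvPowerSeries ((Fin n × Fin n) ⊕ (Fin n × Fin n)) ℚ) :=
    NoZeroDivisors.to_isDomain _
  set Sset : Finset (Fin n ⊕ Fin n) := Finset.univ.image fun i => Sum.inl (S i) with hSset
  set Tset : Finset (Fin n ⊕ Fin n) := Finset.univ.image fun i => Sum.inr (T i) with hTset
  set Efl : (Fin n ⊕ Fin n) → (Fin n ⊕ Fin n) → Prop := flowEdgesLR DL DR G.B with hEfl
  have hirr : ∀ v, ¬ Efl v v := by
    rintro (v | v) h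
    · exact G.D_irrefl v (hDL v v h)
    · exact G.D_irrefl v (hDR v v h)
  have hd : Disjoint Sset Tset := by
    rw [Finset.disjoint_left]
    rintro x hx hx'
    rw [hSset, Finset.mem_image] at hx
    rw [hTset, Finset.mem_image] at hx'
    obtain ⟨i, _, rfl⟩ := hx
    obtain ⟨j, _, hj⟩ := hx'
    exact absurd hj (by simp)
  have hb : ∀ r', Nonempty (UnitFlow Efl Sset Tset r') → r' < k := by
    intro r' hr'
    have h1 : r' ≤ maxFlow Efl Sset Tset := by
      apply le_csSup
      · exact ⟨Sset.card, fun x hx => FlowAux.flow_le_cardS hx.some⟩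
      · exact hr'
    have h2 := hflow
    omega
  obtain ⟨C, hCcard, hCblock⟩ := FlowAux.exists_cut Efl hirr Sset Tset hd k hb
  set Af : Finset (Fin n) :=
    Finset.univ.filter (fun i => (Sum.inl i : Fin n ⊕ Fin n) ∈ C) with hAf
  set Bf : Finset (Fin n) :=
    Finset.univ.filter (fun i => (Sum.inr i : Fin n ⊕ Fin n) ∈ C) with hBf
  have hAmem : ∀ v : Fin n, v ∈ Af ↔ (Sum.inl v : Fin n ⊕ Fin n) ∈ C := by
    intro v; simp [hAf]
  have hBmem : ∀ v : Fin n, v ∈ Bf ↔ (Sum.inr v : Fin n ⊕ Fin n) ∈ C := by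
    intro v; simp [hBf]
  have hABcard : Af.card + Bf.card ≤ C.card := by
    have h1 : (Af.image (fun i => (Sum.inl i : Fin n ⊕ Fin n)))
        ∪ (Bf.image (fun i => (Sum.inr i : Fin n ⊕ Fin n))) ⊆ C := by
      intro x hx
      rcases Finset.mem_union.mp hx with hx | hx <;>
      · obtain ⟨a, ha, rfl⟩ := Finset.mem_image.mp hx
        simp only [hAf, hBf, Finset.mem_filter] at ha
        exact ha.2
    have hdisj2 : Disjoint (Af.image (fun i => (Sum.inl i : Fin n ⊕ Fin n)))
        (Bf.image (fun i => (Sum.inr i : Fin n ⊕ Fin n))) := by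
      rw [Finset.disjoint_left]
      intro x hx hx'
      obtain ⟨a, _, rfl⟩ := Finset.mem_image.mp hx
      obtain ⟨b, _, hb'⟩ := Finset.mem_image.mp hx'
      exact absurd hb' (by simp)
    calc Af.card + Bf.card
        = (Af.image (fun i => (Sum.inl i : Fin n ⊕ Fin n))).card
          + (Bf.image (fun i => (Sum.inr i : Fin n ⊕ Fin n))).card := by
          rw [Finset.card_image_of_injective _ Sum.inl_injective,
            Finset.card_image_of_injective _ Sum.inr_injective]
      _ = ((Af.image (fun i => (Sum.inl i : Fin n ⊕ Fin n)))
          ∪ (Bf.image (fun i => (Sum.inr i : Fin n ⊕ Fin n)))).card :=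
          (Finset.card_union_of_disjoint hdisj2).symm
      _ ≤ C.card := Finset.card_le_card h1
  set badL : Fin n → Prop := fun l =>
    l ∉ Af ∧ ∃ i, Relation.ReflTransGen (fun a b => DL a b ∧ b ∉ Af) l (S i) with hbadL
  set badR : Fin n → Prop := fun r' =>
    r' ∉ Bf ∧ ∃ j, Relation.ReflTransGen (fun a b => DR a b ∧ b ∉ Bf) r' (T j) with hbadR
  have keyCut : ∀ l r', (l = r' ∨ G.B l r') → badL l → badR r' → False := by
    intro l r' hlr hbl hbr
    obtain ⟨hlA, i, hwalkL⟩ := hbl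
    obtain ⟨hrB, j, hwalkR⟩ := hbr
    have hleft : ∀ (a b : Fin n), Relation.ReflTransGen (fun a b => DL a b ∧ b ∉ Af) a b →
        a ∉ Af →
        Relation.ReflTransGen (fun x y => Efl x y ∧ y ∉ C) (Sum.inl b) (Sum.inl a)
          ∧ b ∉ Af := by
      intro a b h ha
      induction h with
      | refl => exact ⟨Relation.ReflTransGen.refl, ha⟩
      | @tail b' c _ hbc ih =>
        refine ⟨Relation.ReflTransGen.head ⟨?_, ?_⟩ ih.1, hbc.2⟩
        · rw [hEfl, flowEdgesLR_ll]; exact hbc.1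
        · intro hc
          exact ih.2 ((hAmem b').mpr hc)
    obtain ⟨hL1, hL2⟩ := hleft l (S i) hwalkL hlA
    have hright : Relation.ReflTransGen (fun x y => Efl x y ∧ y ∉ C)
        (Sum.inr r') (Sum.inr (T j)) := by
      refine Relation.ReflTransGen.lift Sum.inr (fun a b hab => ?_) _ _ hwalkR
      refine ⟨?_, fun hc => hab.2 ((hBmem b).mpr hc)⟩
      rw [hEfl, flowEdgesLR_rr]; exact hab.1
    have hcross : (fun x y => Efl x y ∧ y ∉ C) (Sum.inl l) (Sum.inr r') := by
      refine ⟨?_, fun hc => hrB ((hBmem r').mpr hc)⟩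
      rw [hEfl, flowEdgesLR_lr]; exact hlr
    have hpath : Relation.ReflTransGen (fun x y => Efl x y ∧ y ∉ C)
        (Sum.inl (S i)) (Sum.inr (T j)) :=
      hL1.trans (Relation.ReflTransGen.head hcross hright)
    have hSmem : (Sum.inl (S i) : Fin n ⊕ Fin n) ∈ Sset := by
      rw [hSset, Finset.mem_image]; exact ⟨i, Finset.mem_univ i, rfl⟩
    have hTmem : (Sum.inr (T j) : Fin n ⊕ Fin n) ∈ Tset := by
      rw [hTset, Finset.mem_image]; exact ⟨j, Finset.mem_univ j, rfl⟩
    have hSnotC : (Sum.inl (S i) : Fin n ⊕ Fin n) ∉ C := fun hc => hL2 ((hAmem _).mpr hc)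
    exact hCblock _ hSmem hSnotC _ hTmem hpath
  -- power series algebra
  have h0L : ∀ i j, MvPowerSeries.constantCoeff (LamL i j) = 0 := by
    intro i j
    rw [hLamL i j]
    by_cases h : DL i j
    · rw [if_pos h]; exact MvPowerSeries.constantCoeff_X _
    · rw [if_neg h]; exact map_zero _
  have h0R : ∀ i j, MvPowerSeries.constantCoeff (LamR i j) = 0 := by
    intro i j
    rw [hLamR i j]
    by_cases h : DR i j
    · rw [if_pos h]; exact MvPowerSeries.constantCoeff_X _
    · rw [if_neg h]; exact map_zero _
  set GmL := Aux.geomSeries (maskOut Af LamL) with hGLdef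
  set GmR := Aux.geomSeries (maskOut Bf LamR) with hGRdef
  set U : Matrix (Fin n) (Fin n) _ := fun l a =>
    (if l ∈ Af ∧ l = a then 1 else 0) + (AL * maskIn Af LamL) l a with hU
  set W : Matrix (Fin n) (Fin n) _ := fun r' b =>
    (if r' ∈ Bf ∧ r' = b then 1 else 0) + (AR * maskIn Bf LamR) r' b with hW
  have hfactL : ∀ l (i : Fin k), ¬ badL l →
      AL l (S i) = ∑ a ∈ Af, U l a * GmL a (S i) := by
    intro l i hbad
    refine factor_lemma LamL AL h0L hAL Af l (S i) ?_
    intro hlA m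
    refine maskOut_pow_zero (D := DL) LamL ?_ Af ?_ m
    · intro a b hab
      by_contra hD
      rw [hLamL a b, if_neg hD] at hab
      exact hab rfl
    · intro hw
      exact hbad ⟨hlA, i, hw⟩
  have hfactR : ∀ r' (j : Fin k), ¬ badR r' →
      AR r' (T j) = ∑ b ∈ Bf, W r' b * GmR b (T j) := by
    intro r' j hbad
    refine factor_lemma LamR AR h0R hAR Bf r' (T j) ?_
    intro hrB m
    refine maskOut_pow_zero (D := DR) LamR ?_ Bf ?_ m
    · intro a b hab
      by_contra hD
      rw [hLamR a b, if_neg hD] at hab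
      exact hab rfl
    · intro hw
      exact hbad ⟨hrB, j, hw⟩
  set Om1 : Matrix (Fin n) (Fin n) (MvPowerSeries ((Fin n × Fin n) ⊕ (Fin n × Fin n)) ℚ) :=
    fun l r' => if badL l then 0 else Om l r' with hOm1
  set Om2 : Matrix (Fin n) (Fin n) (MvPowerSeries ((Fin n × Fin n) ⊕ (Fin n × Fin n)) ℚ) :=
    fun l r' => if badL l then Om l r' else 0 with hOm2
  have hOmsplit : ∀ l r', Om l r' = Om1 l r' + Om2 l r' := by
    intro l r'
    simp only [hOm1, hOm2]
    by_cases h : badL l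
    · rw [if_pos h, if_pos h, zero_add]
    · rw [if_neg h, if_neg h, add_zero]
  have hOm2good : ∀ l r', Om2 l r' ≠ 0 → ¬ badR r' := by
    intro l r' h hbr
    by_cases hbl : badL l
    · have hOm2eq : Om2 l r' = Om l r' := by
        simp only [hOm2]; rw [if_pos hbl]
      have hcase : l = r' ∨ G.B l r' := by
        by_contra hc
        apply h
        rw [hOm2eq, hOm l r', if_neg hc]
      exact keyCut l r' hcase hbl hbr
    · exact h (by simp only [hOm2]; rw [if_neg hbl])
  set P1 : Matrix (Fin k) ↥Af (MvPowerSeries ((Fin n × Fin n) ⊕ (Fin n × Fin n)) ℚ) :=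
    fun s a => GmL ↑a (S s) with hP1
  set Q1 : Matrix ↥Af (Fin k) (MvPowerSeries ((Fin n × Fin n) ⊕ (Fin n × Fin n)) ℚ) :=
    fun a t => ∑ l, ∑ r', U l ↑a * (Om1 l r' * AR r' (T t)) with hQ1
  set P2 : Matrix (Fin k) ↥Bf (MvPowerSeries ((Fin n × Fin n) ⊕ (Fin n × Fin n)) ℚ) :=
    fun s b => ∑ l, ∑ r', AL l (S s) * (Om2 l r' * W r' ↑b) with hP2
  set Q2 : Matrix ↥Bf (Fin k) (MvPowerSeries ((Fin n × Fin n) ⊕ (Fin n × Fin n)) ℚ) :=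
    fun b t => GmR ↑b (T t) with hQ2
  have hmain : Gam.submatrix S T = Matrix.fromCols P1 P2 * Matrix.fromRows Q1 Q2 := by
    rw [Matrix.fromCols_mul_fromRows]
    ext s t
    rw [Matrix.add_apply, Matrix.submatrix_apply, hGam]
    have hexp : (ALᵀ * Om * AR) (S s) (T t)
        = ∑ l, ∑ r', AL l (S s) * (Om l r' * AR r' (T t)) := by
      rw [Matrix.mul_apply, Finset.sum_comm]
      apply Finset.sum_congr rfl
      intro j _
      rw [Matrix.mul_apply, Finset.sum_mul]
      apply Finset.sum_congr rfl
      intro x _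
      rw [Matrix.transpose_apply, mul_assoc]
    rw [hexp]
    have hsplitOm : ∑ l, ∑ r', AL l (S s) * (Om l r' * AR r' (T t))
        = (∑ l, ∑ r', AL l (S s) * (Om1 l r' * AR r' (T t)))
          + ∑ l, ∑ r', AL l (S s) * (Om2 l r' * AR r' (T t)) := by
      rw [← Finset.sum_add_distrib]
      refine Finset.sum_congr rfl fun l _ => ?_
      rw [← Finset.sum_add_distrib]
      refine Finset.sum_congr rfl fun r' _ => ?_
      rw [hOmsplit l r']
      ring
    rw [hsplitOm]
    have hS1 : ∑ l, ∑ r', AL l (S s) * (Om1 l r' * AR r' (T t)) = (P1 * Q1) s t := by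
      have hPQ1 : (P1 * Q1) s t
          = ∑ l, ∑ r', (∑ a ∈ Af, U l a * GmL a (S s)) * (Om1 l r' * AR r' (T t)) := by
        rw [Matrix.mul_apply]
        calc ∑ a : ↥Af, P1 s a * Q1 a t
            = ∑ a : ↥Af, ∑ l, ∑ r',
                GmL ↑a (S s) * (U l ↑a * (Om1 l r' * AR r' (T t))) := by
              refine Finset.sum_congr rfl fun a _ => ?_
              show GmL ↑a (S s) * (∑ l, ∑ r', U l ↑a * (Om1 l r' * AR r' (T t))) = _
              rw [Finset.mul_sum]
              refine Finset.sum_congr rfl fun l _ => ?_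
              rw [Finset.mul_sum]
          _ = ∑ l, ∑ a : ↥Af, ∑ r',
                GmL ↑a (S s) * (U l ↑a * (Om1 l r' * AR r' (T t))) := Finset.sum_comm
          _ = ∑ l, ∑ r', ∑ a : ↥Af,
                GmL ↑a (S s) * (U l ↑a * (Om1 l r' * AR r' (T t))) := by
              refine Finset.sum_congr rfl fun l _ => ?_
              exact Finset.sum_comm
          _ = ∑ l, ∑ r', (∑ a ∈ Af, U l a * GmL a (S s)) * (Om1 l r' * AR r' (T t)) := by
              refine Finset.sum_congr rfl fun l _ => ?_
              refine Finset.sum_congr rfl fun r' _ => ?_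
              rw [← Finset.sum_coe_sort Af (fun a => U l a * GmL a (S s)), Finset.sum_mul]
              refine Finset.sum_congr rfl fun a _ => ?_
              ring
      rw [hPQ1]
      apply Finset.sum_congr rfl
      intro l _
      apply Finset.sum_congr rfl
      intro r' _
      by_cases hb : badL l
      · have hz : Om1 l r' = 0 := by simp only [hOm1]; rw [if_pos hb]
        rw [hz]; ring
      · rw [hfactL l s hb]
    have hS2 : ∑ l, ∑ r', AL l (S s) * (Om2 l r' * AR r' (T t)) = (P2 * Q2) s t := by
      have hPQ2 : (P2 * Q2) s t
          = ∑ l, ∑ r', AL l (S s) * (Om2 l r' * (∑ b ∈ Bf, W r' b * GmR b (T t))) := by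
        rw [Matrix.mul_apply]
        calc ∑ b : ↥Bf, P2 s b * Q2 b t
            = ∑ b : ↥Bf, ∑ l, ∑ r',
                AL l (S s) * (Om2 l r' * W r' ↑b) * GmR ↑b (T t) := by
              refine Finset.sum_congr rfl fun b _ => ?_
              show (∑ l, ∑ r', AL l (S s) * (Om2 l r' * W r' ↑b)) * GmR ↑b (T t) = _
              rw [Finset.sum_mul]
              refine Finset.sum_congr rfl fun l _ => ?_
              rw [Finset.sum_mul]
          _ = ∑ l, ∑ b : ↥Bf, ∑ r',
                AL l (S s) * (Om2 l r' * W r' ↑b) * GmR ↑b (T t) := Finset.sum_comm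
          _ = ∑ l, ∑ r', ∑ b : ↥Bf,
                AL l (S s) * (Om2 l r' * W r' ↑b) * GmR ↑b (T t) := by
              refine Finset.sum_congr rfl fun l _ => ?_
              exact Finset.sum_comm
          _ = ∑ l, ∑ r',
                AL l (S s) * (Om2 l r' * (∑ b ∈ Bf, W r' b * GmR b (T t))) := by
              refine Finset.sum_congr rfl fun l _ => ?_
              refine Finset.sum_congr rfl fun r' _ => ?_
              rw [← Finset.sum_coe_sort Bf (fun b => W r' b * GmR b (T t)),
                Finset.mul_sum, Finset.mul_sum]
              refine Finset.sum_congr rfl fun b _ => ?_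
              ring
      rw [hPQ2]
      apply Finset.sum_congr rfl
      intro l _
      apply Finset.sum_congr rfl
      intro r' _
      by_cases hz : Om2 l r' = 0
      · rw [hz]; ring
      · rw [hfactR r' t (hOm2good l r' hz)]
    rw [hS1, hS2]
  rw [hmain]
  apply det_mul_card_lt
  rw [Fintype.card_sum, Fintype.card_coe, Fintype.card_coe]
  omega
end

section
/- Let G be the mixed graph on {1,…,5} with directed edges 1→2, 1→3, 1→4, 4→5 and bidirected edges 1↔2, 1↔3, 1↔4, 1↔5, and let Σ = (I−Λ)⁻ᵀΩ(I−Λ)⁻¹ with symbolic parameters. Then |Σ_{{1,2,4},{1,3,5}}| − λ₄₅ |Σ_{{1,2,4},{1,3,4}}| = 0 identically, and |Σ_{{1,2,4},{1,3,4}}| is not the zero polynomial; hence λ₄₅ = |Σ_{{1,2,4},{1,3,5}}| / |Σ_{{1,2,4},{1,3,4}}| generically. -/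
open Matrix

/-- The polynomial ring for the 5-node example: indeterminates `λ_{ij}`
(left summand) and `ω_{ij}` (right summand), over `ℚ`. -/
local notation "R16" => MvPolynomial ((Fin 5 × Fin 5) ⊕ (Fin 5 × Fin 5)) ℚ

set_option maxHeartbeats 1000000 in
/-- **The example of Figure 2.**  Let `G` be the mixed graph on `{1,…,5}`
(here `{0,…,4}`) with directed edges `1→2, 1→3, 1→4, 4→5` and bidirected edges
`1↔2, 1↔3, 1↔4, 1↔5`, and let `Σ = (I-Λ)⁻ᵀ Ω (I-Λ)⁻¹` with symbolic
parameters.  Then `|Σ_{{1,2,4},{1,3,5}}| - λ₄₅ |Σ_{{1,2,4},{1,3,4}}| = 0`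
identically, and `|Σ_{{1,2,4},{1,3,4}}|` is not the zero polynomial; hence
`λ₄₅ = |Σ_{{1,2,4},{1,3,5}}| / |Σ_{{1,2,4},{1,3,4}}|` in the field of rational
functions. -/
theorem figure_two_identification
    (Lam Om Sig : Matrix (Fin 5) (Fin 5) R16)
    (hLam : Lam = Matrix.of fun i j =>
      if (i, j) = (0, 1) ∨ (i, j) = (0, 2) ∨ (i, j) = (0, 3) ∨ (i, j) = (3, 4)
      then MvPolynomial.X (Sum.inl (i, j)) else 0)
    (hOm : Om = Matrix.of fun i j =>
      if i = j then MvPolynomial.X (Sum.inr (i, i))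
      else if i = 0 then MvPolynomial.X (Sum.inr ((0 : Fin 5), j))
      else if j = 0 then MvPolynomial.X (Sum.inr ((0 : Fin 5), i))
      else 0)
    (hSig : Sig = (1 - Lam)⁻¹ᵀ * Om * (1 - Lam)⁻¹) :
    (Sig.submatrix ![0, 1, 3] ![0, 2, 4]).det
        - Lam 3 4 * (Sig.submatrix ![0, 1, 3] ![0, 2, 3]).det = 0
      ∧ (Sig.submatrix ![0, 1, 3] ![0, 2, 3]).det ≠ 0
      ∧ algebraMap R16 (FractionRing R16) (Lam 3 4) =
          algebraMap R16 (FractionRing R16) (Sig.submatrix ![0, 1, 3] ![0, 2, 4]).det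
            / algebraMap R16 (FractionRing R16)
                (Sig.submatrix ![0, 1, 3] ![0, 2, 3]).det := by
  subst hLam hOm hSig
  set M : Matrix (Fin 5) (Fin 5) R16 := Matrix.of fun i j =>
      if (i, j) = (0, 1) ∨ (i, j) = (0, 2) ∨ (i, j) = (0, 3) ∨ (i, j) = (3, 4)
      then MvPolynomial.X (Sum.inl (i, j)) else 0 with hM
  set l01 : R16 := MvPolynomial.X (Sum.inl ((0 : Fin 5), (1 : Fin 5))) with h01
  set l02 : R16 := MvPolynomial.X (Sum.inl ((0 : Fin 5), (2 : Fin 5))) with h02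
  set l03 : R16 := MvPolynomial.X (Sum.inl ((0 : Fin 5), (3 : Fin 5))) with h03
  set l34 : R16 := MvPolynomial.X (Sum.inl ((3 : Fin 5), (4 : Fin 5))) with h34
  set N : Matrix (Fin 5) (Fin 5) R16 :=
    !![1, l01, l02, l03, l03 * l34;
       0, 1, 0, 0, 0;
       0, 0, 1, 0, 0;
       0, 0, 0, 1, l34;
       0, 0, 0, 0, 1] with hNdef
  have hN : (1 - M) * N = 1 := by
    refine Matrix.ext fun i j => ?_
    fin_cases i <;> fin_cases j <;>
      simp [hM, hNdef, Matrix.mul_apply, Matrix.sub_apply, Matrix.one_apply,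
        Fin.sum_univ_five, Matrix.vecHead, Matrix.vecTail] <;> ring
  have hInv : (1 - M)⁻¹ = N := Matrix.inv_eq_right_inv hN
  rw [hInv]
  set w00 : R16 := MvPolynomial.X (Sum.inr ((0 : Fin 5), (0 : Fin 5)))
  set w11 : R16 := MvPolynomial.X (Sum.inr ((1 : Fin 5), (1 : Fin 5)))
  set w22 : R16 := MvPolynomial.X (Sum.inr ((2 : Fin 5), (2 : Fin 5)))
  set w33 : R16 := MvPolynomial.X (Sum.inr ((3 : Fin 5), (3 : Fin 5)))
  set w44 : R16 := MvPolynomial.X (Sum.inr ((4 : Fin 5), (4 : Fin 5)))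
  set w01 : R16 := MvPolynomial.X (Sum.inr ((0 : Fin 5), (1 : Fin 5)))
  set w02 : R16 := MvPolynomial.X (Sum.inr ((0 : Fin 5), (2 : Fin 5)))
  set w03 : R16 := MvPolynomial.X (Sum.inr ((0 : Fin 5), (3 : Fin 5)))
  set w04 : R16 := MvPolynomial.X (Sum.inr ((0 : Fin 5), (4 : Fin 5)))
  have hW : (Matrix.of fun i j : Fin 5 =>
      if i = j then MvPolynomial.X (Sum.inr (i, i))
      else if i = 0 then MvPolynomial.X (Sum.inr ((0 : Fin 5), j))
      else if j = 0 then MvPolynomial.X (Sum.inr ((0 : Fin 5), i))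
      else (0 : R16)) =
    !![w00, w01, w02, w03, w04;
       w01, w11, 0, 0, 0;
       w02, 0, w22, 0, 0;
       w03, 0, 0, w33, 0;
       w04, 0, 0, 0, w44] := by
    refine Matrix.ext fun i j => ?_
    fin_cases i <;> fin_cases j <;> simp [Matrix.vecHead, Matrix.vecTail] <;> rfl
  rw [hW]
  have hM34 : (M 3 4 : R16) = l34 := by simp [hM, h34]
  have hB : (((Nᵀ *
      !![w00, w01, w02, w03, w04;
         w01, w11, 0, 0, 0;
         w02, 0, w22, 0, 0;
         w03, 0, 0, w33, 0;
         w04, 0, 0, 0, w44] * N).submatrix ![0, 1, 3] ![0, 2, 3]).det : R16)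
      = -(w01 * w02 * w33) := by
    rw [Matrix.det_fin_three]
    simp [hNdef, Matrix.det_fin_three, Matrix.submatrix_apply, Matrix.mul_apply,
      Matrix.transpose_apply, Fin.sum_univ_five, Matrix.vecHead, Matrix.vecTail]
    ring
  have hA : (((Nᵀ *
      !![w00, w01, w02, w03, w04;
         w01, w11, 0, 0, 0;
         w02, 0, w22, 0, 0;
         w03, 0, 0, w33, 0;
         w04, 0, 0, 0, w44] * N).submatrix ![0, 1, 3] ![0, 2, 4]).det : R16)
      = l34 * -(w01 * w02 * w33) := by
    rw [Matrix.det_fin_three]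
    simp [hNdef, Matrix.det_fin_three, Matrix.submatrix_apply, Matrix.mul_apply,
      Matrix.transpose_apply, Fin.sum_univ_five, Matrix.vecHead, Matrix.vecTail]
    ring
  have hBne : (-(w01 * w02 * w33) : R16) ≠ 0 := by
    simp only [neg_ne_zero]
    exact mul_ne_zero (mul_ne_zero (MvPolynomial.X_ne_zero _) (MvPolynomial.X_ne_zero _))
      (MvPolynomial.X_ne_zero _)
  refine ⟨?_, ?_, ?_⟩
  · rw [hA, hB, hM34]; ring
  · rw [hB]; exact hBne
  · rw [hA, hB, hM34]
    rw [_root_.map_mul, mul_div_assoc, div_self, mul_one]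
    exact (map_ne_zero_iff _ (IsFractionRing.injective R16 (FractionRing R16))).mpr hBne
end
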